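/- arXiv:1011.1614 — 7 statements merged into one kernel-verified Lean document; each statement's English description precedes it below -/
import Mathlib

section
/- For all complex numbers t and z, the series ∑_{N=0}^∞ (−1)^N P_{2N+1}(t,z) / (2N+1)! converges and its sum equals sin(z − t). -/
set_option maxHeartbeats 800000

/-- The Gould-Hopper polynomial (with `m = 3`). -/
noncomputable def ghP (N : ℕ) (t z : ℂ) : ℂ :=
  (N.factorial : ℂ) * ∑ k ∈ Finset.range (N / 3 + 1),
    t ^ k * z ^ (N - 3 * k) / ((k.factorial : ℂ) * ((N - 3 * k).factorial : ℂ))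

/-- Reindexing equivalence for the diagonal sum `N = 3k + m`. -/
def ghEquiv : (Σ N : ℕ, Fin (N / 3 + 1)) ≃ ℕ × ℕ where
  toFun p := (p.2.val, p.1 - 3 * p.2.val)
  invFun q := ⟨3 * q.1 + q.2, ⟨q.1, by omega⟩⟩
  left_inv p := by
    obtain ⟨N, k, hk⟩ := p
    have h3 : 3 * (k : ℕ) ≤ N := by omega
    obtain ⟨m, rfl⟩ : ∃ m, N = 3 * (k : ℕ) + m := ⟨N - 3 * k, by omega⟩
    have hm : 3 * (k : ℕ) + (3 * (k : ℕ) + m - 3 * (k : ℕ)) = 3 * (k : ℕ) + m := by omega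
    exact Sigma.ext hm ((Fin.heq_ext_iff (by
      show (3 * (k : ℕ) + (3 * (k : ℕ) + m - 3 * (k : ℕ))) / 3 + 1 = (3 * (k : ℕ) + m) / 3 + 1
      rw [hm])).mpr rfl)
  right_inv q := by
    obtain ⟨k, m⟩ := q
    simp [Nat.add_sub_cancel_left]

lemma ghP_hasSum (t z x : ℂ) :
    HasSum (fun N : ℕ => ghP N t z * x ^ N / (N.factorial : ℂ))
      (Complex.exp (t * x ^ 3) * Complex.exp (z * x)) := by
  have ha : HasSum (fun k : ℕ => (t * x ^ 3) ^ k / (k.factorial : ℂ))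
      (Complex.exp (t * x ^ 3)) := by
    rw [Complex.exp_eq_exp_ℂ]
    exact NormedSpace.expSeries_div_hasSum_exp _
  have hb : HasSum (fun m : ℕ => (z * x) ^ m / (m.factorial : ℂ))
      (Complex.exp (z * x)) := by
    rw [Complex.exp_eq_exp_ℂ]
    exact NormedSpace.expSeries_div_hasSum_exp _
  have hnorm : ∀ w : ℂ, Summable fun n : ℕ => ‖w ^ n / (n.factorial : ℂ)‖ := by
    intro w
    have := Real.summable_pow_div_factorial ‖w‖
    refine this.congr fun n => ?_
    simp [norm_div, norm_pow, Complex.norm_natCast]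
  have hsum : Summable fun p : ℕ × ℕ =>
      ((t * x ^ 3) ^ p.1 / (p.1.factorial : ℂ)) * ((z * x) ^ p.2 / (p.2.factorial : ℂ)) := by
    apply summable_mul_of_summable_norm (hnorm _) (hnorm _)
  have hprod := ha.mul hb hsum
  have hcomp := (ghEquiv.hasSum_iff (a := Complex.exp (t * x ^ 3) * Complex.exp (z * x))).mpr hprod
  refine hcomp.sigma fun N => ?_
  have hfin := hasSum_fintype (fun k : Fin (N / 3 + 1) =>
    ((t * x ^ 3) ^ (k : ℕ) / ((k : ℕ).factorial : ℂ)) *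
      ((z * x) ^ (N - 3 * (k : ℕ)) / ((N - 3 * (k : ℕ)).factorial : ℂ)))
  convert hfin using 1
  · funext k; rfl
  rw [Fin.sum_univ_eq_sum_range
    (fun k => ((t * x ^ 3) ^ k / ((k).factorial : ℂ)) *
      ((z * x) ^ (N - 3 * k) / ((N - 3 * k).factorial : ℂ)))]
  rw [ghP, Finset.mul_sum, Finset.sum_mul, Finset.sum_div]
  refine Finset.sum_congr rfl fun k hk => ?_
  have hk3 : 3 * k ≤ N := by
    have := Finset.mem_range.mp hk
    omega
  have hxN : x ^ N = x ^ (3 * k) * x ^ (N - 3 * k) := by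
    rw [← pow_add]; congr 1; omega
  have hNfac : ((N.factorial : ℂ)) ≠ 0 := Nat.cast_ne_zero.mpr N.factorial_ne_zero
  have hkfac : ((k.factorial : ℂ)) ≠ 0 := Nat.cast_ne_zero.mpr k.factorial_ne_zero
  have hmfac : (((N - 3 * k).factorial : ℂ)) ≠ 0 :=
    Nat.cast_ne_zero.mpr (N - 3 * k).factorial_ne_zero
  field_simp
  rw [hxN, mul_pow]
  ring_nf

/-- The series `∑_{N=0}^∞ (−1)^N P_{2N+1}(t,z) / (2N+1)!` converges to `sin(z − t)`. -/
theorem gouldHopper_sin_sum (t z : ℂ) :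
    HasSum (fun N : ℕ => (-1) ^ N * ghP (2 * N + 1) t z / ((2 * N + 1).factorial : ℂ))
      (Complex.sin (z - t)) := by
  have hA := ghP_hasSum t z Complex.I
  have hB := ghP_hasSum t z (-Complex.I)
  have hI3 : Complex.I ^ 3 = -Complex.I := by
    rw [pow_succ, Complex.I_sq]; ring
  have hC : HasSum (fun N : ℕ =>
      (ghP N t z * Complex.I ^ N / (N.factorial : ℂ)
        - ghP N t z * (-Complex.I) ^ N / (N.factorial : ℂ)) / (2 * Complex.I))
      ((Complex.exp (t * Complex.I ^ 3) * Complex.exp (z * Complex.I)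
        - Complex.exp (t * (-Complex.I) ^ 3) * Complex.exp (z * (-Complex.I)))
          / (2 * Complex.I)) := (hA.sub hB).div_const _
  have hinj : Function.Injective (fun n : ℕ => 2 * n + 1) := fun a b h => by
    simp only at h; omega
  have hsupp : ∀ x : ℕ, x ∉ Set.range (fun n : ℕ => 2 * n + 1) →
      (ghP x t z * Complex.I ^ x / (x.factorial : ℂ)
        - ghP x t z * (-Complex.I) ^ x / (x.factorial : ℂ)) / (2 * Complex.I) = 0 := by
    intro x hx
    have hx' : ∃ m, x = 2 * m := by
      rcases Nat.even_or_odd x with h | h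
      · obtain ⟨m, hm⟩ := h; exact ⟨m, by omega⟩
      · obtain ⟨m, hm⟩ := h; exact absurd ⟨m, by show 2 * m + 1 = x; omega⟩ hx
    obtain ⟨m, rfl⟩ := hx'
    have : (-Complex.I) ^ (2 * m) = Complex.I ^ (2 * m) := by
      rw [pow_mul, pow_mul, neg_sq]
    rw [this, sub_self, zero_div]
  have key := (Function.Injective.hasSum_iff hinj hsupp).mpr hC
  have hfun : (fun N : ℕ => (-1) ^ N * ghP (2 * N + 1) t z / ((2 * N + 1).factorial : ℂ))
      = (fun x : ℕ =>
        (ghP x t z * Complex.I ^ x / (x.factorial : ℂ)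
          - ghP x t z * (-Complex.I) ^ x / (x.factorial : ℂ)) / (2 * Complex.I))
        ∘ (fun n : ℕ => 2 * n + 1) := by
    funext n
    simp only [Function.comp_apply]
    have h1 : Complex.I ^ (2 * n + 1) = (-1) ^ n * Complex.I := by
      rw [pow_succ, pow_mul, Complex.I_sq]
    have h2 : (-Complex.I) ^ (2 * n + 1) = -((-1) ^ n * Complex.I) := by
      rw [Odd.neg_pow ⟨n, by ring⟩, h1]
    rw [h1, h2]
    have hfac : (((2 * n + 1).factorial : ℂ)) ≠ 0 :=
      Nat.cast_ne_zero.mpr (2 * n + 1).factorial_ne_zero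
    field_simp
    ring
  have hval : (Complex.exp (t * Complex.I ^ 3) * Complex.exp (z * Complex.I)
        - Complex.exp (t * (-Complex.I) ^ 3) * Complex.exp (z * (-Complex.I)))
          / (2 * Complex.I) = Complex.sin (z - t) := by
    rw [hI3]
    have hneg3 : (-Complex.I) ^ 3 = Complex.I := by
      rw [Odd.neg_pow ⟨1, by ring⟩, hI3]; ring
    rw [hneg3, ← Complex.exp_add, ← Complex.exp_add]
    have e1 : t * -Complex.I + z * Complex.I = (z - t) * Complex.I := by ring
    have e2 : t * Complex.I + z * -Complex.I = -((z - t) * Complex.I) := by ring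
    have hx : -(z - t) * Complex.I = -((z - t) * Complex.I) := by ring
    rw [e1, e2, Complex.sin, hx]
    rw [div_eq_iff (by simp [Complex.I_ne_zero] : (2 : ℂ) * Complex.I ≠ 0)]
    linear_combination (Complex.exp ((z - t) * Complex.I)
      - Complex.exp (-((z - t) * Complex.I))) * Complex.I_sq
  rw [hfun, ← hval]
  exact key
end

section
/- Let N ≥ 3 and let q_1, …, q_N : I → ℂ be differentiable functions on an open real interval I that are pairwise distinct at every t ∈ I, and suppose the monic polynomial ℙ_N(t,z) = ∏_{j=1}^N (z − q_j(t)) satisfies ∂_t ℙ_N(t,z) = ∂_z³ ℙ_N(t,z) for all t ∈ I and all complex z. Then the roots obey the dynamics q̇_j(t) = −6 · ∑_{m<n, m≠j, n≠j} 1 / [(q_j(t) − q_m(t)) (q_j(t) − q_n(t))] for every j = 1, …, N, where the sum is over all pairs m < n with m ≠ j and n ≠ j. -/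
open Polynomial in
lemma lin_prod_derivative {ι : Type*} [DecidableEq ι] (s : Finset ι) (c : ι → ℂ) :
    derivative (∏ i ∈ s, (X - C (c i))) =
      ∑ i ∈ s, ∏ k ∈ s.erase i, (X - C (c k)) := by
  induction s using Finset.induction_on with
  | empty => simp
  | @insert a s ha ih =>
    rw [Finset.prod_insert ha, derivative_mul, ih, Finset.sum_insert ha,
      Finset.erase_insert ha]
    simp only [derivative_sub, derivative_X, derivative_C, sub_zero, one_mul]
    rw [Finset.mul_sum]
    congr 1
    refine Finset.sum_congr rfl fun i hi => ?_
    have hia : a ≠ i := fun h => ha (h ▸ hi)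
    rw [Finset.erase_insert_of_ne hia,
      Finset.prod_insert (fun h => ha (Finset.erase_subset _ _ h))]

open Polynomial in
lemma iteratedDeriv_poly_eval (n : ℕ) (p : ℂ[X]) :
    iteratedDeriv n (fun x : ℂ => p.eval x) = fun x => (derivative^[n] p).eval x := by
  induction n with
  | zero => simp
  | succ n ih =>
    rw [iteratedDeriv_succ, ih, Function.iterate_succ_apply']
    funext x
    exact Polynomial.deriv _

/-- If the roots `q_1, …, q_N` of the monic polynomial
`ℙ_N(t,z) = ∏_j (z − q_j(t))` are differentiable and pairwise distinct on an open
interval `I`, and `ℙ_N` satisfies `∂_t ℙ_N = ∂_z³ ℙ_N`, then the roots obey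
`q̇_j = −6 ∑_{m<n, m≠j, n≠j} 1 / [(q_j − q_m)(q_j − q_n)]`. -/
theorem root_dynamics_of_sigma_flow (N : ℕ) (hN : 3 ≤ N) (a b : ℝ)
    (q : Fin N → ℝ → ℂ)
    (hdiff : ∀ j, ∀ t ∈ Set.Ioo a b, DifferentiableAt ℝ (q j) t)
    (hdist : ∀ t ∈ Set.Ioo a b, ∀ j k : Fin N, j ≠ k → q j t ≠ q k t)
    (hP : ∀ t ∈ Set.Ioo a b, ∀ z : ℂ,
      deriv (fun s : ℝ => ∏ j, (z - q j s)) t =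
        iteratedDeriv 3 (fun w : ℂ => ∏ j, (w - q j t)) z) :
    ∀ t ∈ Set.Ioo a b, ∀ j : Fin N,
      deriv (q j) t =
        -6 * ∑ p ∈ Finset.univ.filter
            (fun p : Fin N × Fin N => p.1 < p.2 ∧ p.1 ≠ j ∧ p.2 ≠ j),
          1 / ((q j t - q p.1 t) * (q j t - q p.2 t)) := by
  classical
  intro t ht j
  open Polynomial in
  set A : ℂ := q j t with hAdef
  set c : Fin N → ℂ := fun k => q k t with hcdef
  set s : Finset (Fin N) := Finset.univ.erase j with hsdef
  have hne : ∀ k ∈ s, A - c k ≠ 0 := by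
    intro k hk
    have hkj : k ≠ j := (Finset.mem_erase.mp hk).1
    exact sub_ne_zero.mpr (hdist t ht j k hkj.symm)
  set D : ℂ := ∏ k ∈ s, (A - c k) with hDdef
  have hD : D ≠ 0 := Finset.prod_ne_zero_iff.mpr hne
  -- LHS
  have hL : deriv (fun u : ℝ => ∏ i, (A - q i u)) t = D * (-(deriv (q j) t)) := by
    have h1 : ∀ i ∈ (Finset.univ : Finset (Fin N)),
        HasDerivAt (fun u => A - q i u) (-(deriv (q i) t)) t :=
      fun i _ => ((hdiff i t ht).hasDerivAt).const_sub A
    have h2 : deriv (fun u : ℝ => ∏ i, (A - q i u)) t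
        = ∑ i, (∏ k ∈ Finset.univ.erase i, (A - q k t)) • (-(deriv (q i) t)) :=
      (HasDerivAt.fun_finset_prod h1).deriv
    rw [h2, Finset.sum_eq_single j]
    · simp [smul_eq_mul, hDdef, hcdef, hsdef]
    · intro i _ hij
      have hjmem : j ∈ Finset.univ.erase i := Finset.mem_erase.mpr ⟨hij.symm, Finset.mem_univ j⟩
      rw [Finset.prod_eq_zero hjmem (by simp [hAdef])]
      simp
    · simp
  -- RHS
  set Q : ℂ[X] := ∏ k ∈ s, (X - C (c k)) with hQdef
  have hR : iteratedDeriv 3 (fun w : ℂ => ∏ k, (w - q k t)) A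
      = 3 * Polynomial.eval A (derivative (derivative Q)) := by
    have hfun : (fun w : ℂ => ∏ k, (w - q k t))
        = fun w => Polynomial.eval w (∏ k, (X - C (c k))) := by
      funext w; simp [Polynomial.eval_prod, hcdef]
    rw [hfun, iteratedDeriv_poly_eval]
    have hsplit : (∏ k, (X - C (c k))) = (X - C A) * Q := by
      rw [hQdef, hsdef]
      have := (Finset.mul_prod_erase Finset.univ (fun k => X - C (c k))
        (Finset.mem_univ j)).symm
      simpa [hAdef, hcdef] using this
    rw [hsplit]
    have hstep : ∀ R : ℂ[X],
        derivative ((X - C A) * R) = R + (X - C A) * derivative R := by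
      intro R; rw [derivative_mul]; simp
    have h3 : derivative^[3] ((X - C A) * Q)
        = derivative (derivative (derivative ((X - C A) * Q))) := rfl
    rw [h3, hstep, derivative_add, hstep, derivative_add, derivative_add, hstep]
    simp only [Polynomial.eval_add, Polynomial.eval_mul, Polynomial.eval_sub,
      Polynomial.eval_X, Polynomial.eval_C, sub_self, zero_mul, add_zero]
    ring
  -- second derivative of Q evaluated at A
  have hQ'' : Polynomial.eval A (derivative (derivative Q))
      = ∑ m ∈ s, ∑ n ∈ s.erase m,
          Polynomial.eval A (∏ k ∈ (s.erase m).erase n, (X - C (c k))) := by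
    rw [hQdef, lin_prod_derivative, map_sum]
    simp only [lin_prod_derivative, Polynomial.eval_finset_sum]
  -- each term
  have hterm : ∀ m ∈ s, ∀ n ∈ s.erase m,
      Polynomial.eval A (∏ k ∈ (s.erase m).erase n, (X - C (c k)))
        = D * (1 / ((A - c m) * (A - c n))) := by
    intro m hm n hn
    have h1 : (A - c n) * ∏ k ∈ (s.erase m).erase n, (A - c k)
        = ∏ k ∈ s.erase m, (A - c k) :=
      Finset.mul_prod_erase (s.erase m) (fun k => A - c k) hn
    have h2 : (A - c m) * ∏ k ∈ s.erase m, (A - c k) = D :=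
      Finset.mul_prod_erase s (fun k => A - c k) hm
    have hm0 : A - c m ≠ 0 := hne m hm
    have hn0 : A - c n ≠ 0 := hne n (Finset.mem_of_mem_erase hn)
    rw [Polynomial.eval_prod]
    simp only [Polynomial.eval_sub, Polynomial.eval_X, Polynomial.eval_C]
    field_simp
    rw [← h2, ← h1]; ring
  -- the combinatorial identity
  set S : ℂ := ∑ p ∈ Finset.univ.filter
      (fun p : Fin N × Fin N => p.1 < p.2 ∧ p.1 ≠ j ∧ p.2 ≠ j),
      1 / ((q j t - q p.1 t) * (q j t - q p.2 t)) with hSdef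
  have hsum : ∑ m ∈ s, ∑ n ∈ s.erase m, (1 / ((A - c m) * (A - c n))) = 2 * S := by
    set T := Finset.univ.filter
      (fun p : Fin N × Fin N => p.1 < p.2 ∧ p.1 ≠ j ∧ p.2 ≠ j) with hT
    set V := Finset.univ.filter
      (fun p : Fin N × Fin N => p.2 < p.1 ∧ p.1 ≠ j ∧ p.2 ≠ j) with hV
    have e1 : ∑ m ∈ s, ∑ n ∈ s.erase m, (1 / ((A - c m) * (A - c n)))
        = ∑ p ∈ (s ×ˢ s).filter (fun p => p.2 ≠ p.1),
            (1 / ((A - c p.1) * (A - c p.2))) := by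
      rw [Finset.sum_filter, Finset.sum_product]
      refine Finset.sum_congr rfl fun m hm => ?_
      rw [← Finset.sum_filter, Finset.filter_ne']
    have e2 : (s ×ˢ s).filter (fun p : Fin N × Fin N => p.2 ≠ p.1) = T ∪ V := by
      ext p
      simp only [Finset.mem_filter, Finset.mem_product, Finset.mem_union,
        Finset.mem_erase, Finset.mem_univ, and_true, true_and, hT, hV, hsdef]
      constructor
      · rintro ⟨⟨h1, h2⟩, h3⟩
        rcases lt_or_gt_of_ne (Ne.symm h3) with h | h
        · exact Or.inl ⟨h, h1, h2⟩
        · exact Or.inr ⟨h, h1, h2⟩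
      · rintro (⟨h, h1, h2⟩ | ⟨h, h1, h2⟩)
        · exact ⟨⟨h1, h2⟩, (ne_of_lt h).symm⟩
        · exact ⟨⟨h1, h2⟩, ne_of_lt h⟩
    have hdisj : Disjoint T V := by
      rw [Finset.disjoint_left]
      intro p hp hq
      rw [hT, Finset.mem_filter] at hp
      rw [hV, Finset.mem_filter] at hq
      exact absurd hq.2.1 (not_lt_of_gt hp.2.1)
    have e3 : ∑ p ∈ V, (1 / ((A - c p.1) * (A - c p.2)))
        = ∑ p ∈ T, (1 / ((A - c p.1) * (A - c p.2))) := by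
      refine Finset.sum_equiv (Equiv.prodComm (Fin N) (Fin N)) ?_ ?_
      · intro p
        simp only [hT, hV, Finset.mem_filter, Finset.mem_univ, true_and,
          Equiv.prodComm_apply, Prod.fst_swap, Prod.snd_swap]
        tauto
      · intro p _
        simp only [Equiv.prodComm_apply, Prod.fst_swap, Prod.snd_swap]
        ring
    rw [e1, e2, Finset.sum_union hdisj, e3]
    have hST : S = ∑ p ∈ T, (1 / ((A - c p.1) * (A - c p.2))) := by
      rw [hSdef, hT]
    rw [hST]; ring
  -- combine
  have key := hP t ht A
  rw [hL, hR, hQ''] at key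
  have key2 : D * (-(deriv (q j) t)) = D * (6 * S) := by
    rw [key]
    rw [Finset.sum_congr rfl (fun m hm => Finset.sum_congr rfl (fun n hn => hterm m hm n hn))]
    have hfac : ∑ m ∈ s, ∑ n ∈ s.erase m, D * (1 / ((A - c m) * (A - c n)))
        = D * ∑ m ∈ s, ∑ n ∈ s.erase m, (1 / ((A - c m) * (A - c n))) := by
      rw [Finset.mul_sum]
      exact Finset.sum_congr rfl fun m _ => (Finset.mul_sum _ _ _).symm
    rw [hfac, hsum]; ring
  have := mul_left_cancel₀ hD key2
  linear_combination -this
end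

section
/- Let N ≥ 3 and let q_1, …, q_N : I → ℂ be differentiable functions on an open real interval I that are pairwise distinct at every t ∈ I and satisfy the root dynamics q̇_j = −6 · ∑_{m<n, m≠j, n≠j} 1 / [(q_j − q_m)(q_j − q_n)] for each j. Then ∑_{i=1}^N q_i(t) and ∑_{i=1}^N q_i(t)² are conserved quantities, i.e. both have zero derivative and are constant on I. -/
private lemma rdc_key0 (a b c : ℂ) (hab : a ≠ b) (hac : a ≠ c) (hbc : b ≠ c) :
    1/((a-b)*(a-c)) + 1/((b-a)*(b-c)) + 1/((c-a)*(c-b)) = 0 := by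
  have h1 := sub_ne_zero.mpr hab
  have h2 := sub_ne_zero.mpr hac
  have h3 := sub_ne_zero.mpr hbc
  have h4 := sub_ne_zero.mpr hab.symm
  have h5 := sub_ne_zero.mpr hac.symm
  have h6 := sub_ne_zero.mpr hbc.symm
  field_simp
  ring

private lemma rdc_key1 (a b c : ℂ) (hab : a ≠ b) (hac : a ≠ c) (hbc : b ≠ c) :
    a * (1/((a-b)*(a-c))) + b * (1/((b-a)*(b-c))) + c * (1/((c-a)*(c-b))) = 0 := by
  have h1 := sub_ne_zero.mpr hab
  have h2 := sub_ne_zero.mpr hac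
  have h3 := sub_ne_zero.mpr hbc
  have h4 := sub_ne_zero.mpr hab.symm
  have h5 := sub_ne_zero.mpr hac.symm
  have h6 := sub_ne_zero.mpr hbc.symm
  field_simp
  ring

private lemma rdc_tri_sum {N : ℕ} (F : Fin N → Fin N → Fin N → ℂ)
    (hF : ∀ a b c : Fin N, a < b → b < c → F a b c + F b a c + F c a b = 0) :
    ∑ j : Fin N, ∑ p ∈ Finset.univ.filter
        (fun p : Fin N × Fin N => p.1 < p.2 ∧ p.1 ≠ j ∧ p.2 ≠ j),
      F j p.1 p.2 = 0 := by
  classical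
  set cond : Fin N × Fin N × Fin N → Prop :=
    fun x => x.2.1 < x.2.2 ∧ x.2.1 ≠ x.1 ∧ x.2.2 ≠ x.1 with hcond
  have h1 : ∑ j : Fin N, ∑ p ∈ Finset.univ.filter
        (fun p : Fin N × Fin N => p.1 < p.2 ∧ p.1 ≠ j ∧ p.2 ≠ j),
      F j p.1 p.2
      = ∑ x ∈ Finset.univ.filter cond, F x.1 x.2.1 x.2.2 := by
    rw [Finset.sum_filter, Fintype.sum_prod_type]
    simp [Finset.sum_filter, hcond]
  rw [h1]
  set T : Finset (Fin N × Fin N × Fin N) :=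
    Finset.univ.filter (fun x => x.1 < x.2.1 ∧ x.2.1 < x.2.2) with hT
  set E2 : Finset (Fin N × Fin N × Fin N) :=
    Finset.univ.filter (fun x => x.2.1 < x.1 ∧ x.1 < x.2.2) with hE2
  set E3 : Finset (Fin N × Fin N × Fin N) :=
    Finset.univ.filter (fun x => x.2.1 < x.2.2 ∧ x.2.2 < x.1) with hE3
  have hsplit : Finset.univ.filter cond = (T ∪ E2) ∪ E3 := by
    ext x
    simp only [hcond, hT, hE2, hE3, Finset.mem_filter, Finset.mem_univ, true_and,
      Finset.mem_union, ne_eq, Fin.lt_def, ← Fin.val_ne_iff]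
    omega
  have hd1 : Disjoint T E2 := by
    rw [Finset.disjoint_left]
    intro x hx hx'
    simp only [hT, hE2, Finset.mem_filter, Finset.mem_univ, true_and, Fin.lt_def] at hx hx'
    omega
  have hd2 : Disjoint (T ∪ E2) E3 := by
    rw [Finset.disjoint_left]
    intro x hx hx'
    simp only [hT, hE2, hE3, Finset.mem_union, Finset.mem_filter, Finset.mem_univ,
      true_and, Fin.lt_def] at hx hx'
    omega
  rw [hsplit, Finset.sum_union hd2, Finset.sum_union hd1]
  have e2 : ∑ x ∈ E2, F x.1 x.2.1 x.2.2 = ∑ y ∈ T, F y.2.1 y.1 y.2.2 := by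
    apply Finset.sum_nbij' (i := fun x : Fin N × Fin N × Fin N => (x.2.1, x.1, x.2.2))
      (j := fun y : Fin N × Fin N × Fin N => (y.2.1, y.1, y.2.2))
    · intro x hx
      simp only [hT, hE2, Finset.mem_filter, Finset.mem_univ, true_and] at hx ⊢
      exact hx
    · intro y hy
      simp only [hT, hE2, Finset.mem_filter, Finset.mem_univ, true_and] at hy ⊢
      exact hy
    · intro x _; rfl
    · intro y _; rfl
    · intro x _; rfl
  have e3 : ∑ x ∈ E3, F x.1 x.2.1 x.2.2 = ∑ y ∈ T, F y.2.2 y.1 y.2.1 := by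
    apply Finset.sum_nbij' (i := fun x : Fin N × Fin N × Fin N => (x.2.1, x.2.2, x.1))
      (j := fun y : Fin N × Fin N × Fin N => (y.2.2, y.1, y.2.1))
    · intro x hx
      simp only [hT, hE3, Finset.mem_filter, Finset.mem_univ, true_and] at hx ⊢
      exact hx
    · intro y hy
      simp only [hT, hE3, Finset.mem_filter, Finset.mem_univ, true_and] at hy ⊢
      exact hy
    · intro x _; rfl
    · intro y _; rfl
    · intro x _; rfl
  rw [e2, e3, ← Finset.sum_add_distrib, ← Finset.sum_add_distrib]
  apply Finset.sum_eq_zero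
  intro x hx
  simp only [hT, Finset.mem_filter, Finset.mem_univ, true_and] at hx
  exact hF x.1 x.2.1 x.2.2 hx.1 hx.2

private lemma rdc_const_of {a b : ℝ} (f : ℝ → ℂ)
    (hf : ∀ t ∈ Set.Ioo a b, DifferentiableAt ℝ f t)
    (h0 : ∀ t ∈ Set.Ioo a b, deriv f t = 0) :
    ∀ t₁ ∈ Set.Ioo a b, ∀ t₂ ∈ Set.Ioo a b, f t₁ = f t₂ := by
  intro t₁ h1 t₂ h2
  apply (convex_Ioo a b).is_const_of_fderivWithin_eq_zero
    (fun x hx => (hf x hx).differentiableWithinAt) ?_ h1 h2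
  intro x hx
  rw [fderivWithin_of_isOpen isOpen_Ioo hx, ← toSpanSingleton_deriv, h0 x hx]
  ext
  simp

/-- If the pairwise-distinct differentiable functions `q_1, …, q_N` on an open
interval `I` satisfy the root dynamics
`q̇_j = −6 ∑_{m<n, m≠j, n≠j} 1 / [(q_j − q_m)(q_j − q_n)]`, then `∑ q_i` and
`∑ q_i²` are conserved: they have zero derivative and are constant on `I`. -/
theorem root_dynamics_conserved (N : ℕ) (hN : 3 ≤ N) (a b : ℝ)
    (q : Fin N → ℝ → ℂ)
    (hdiff : ∀ j, ∀ t ∈ Set.Ioo a b, DifferentiableAt ℝ (q j) t)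
    (hdist : ∀ t ∈ Set.Ioo a b, ∀ j k : Fin N, j ≠ k → q j t ≠ q k t)
    (hdyn : ∀ t ∈ Set.Ioo a b, ∀ j : Fin N,
      deriv (q j) t =
        -6 * ∑ p ∈ Finset.univ.filter
            (fun p : Fin N × Fin N => p.1 < p.2 ∧ p.1 ≠ j ∧ p.2 ≠ j),
          1 / ((q j t - q p.1 t) * (q j t - q p.2 t))) :
    (∀ t ∈ Set.Ioo a b, deriv (fun s : ℝ => ∑ i, q i s) t = 0) ∧
    (∀ t ∈ Set.Ioo a b, deriv (fun s : ℝ => ∑ i, (q i s) ^ 2) t = 0) ∧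
    (∀ t₁ ∈ Set.Ioo a b, ∀ t₂ ∈ Set.Ioo a b,
      (∑ i, q i t₁) = (∑ i, q i t₂) ∧ (∑ i, (q i t₁) ^ 2) = (∑ i, (q i t₂) ^ 2)) := by
  have hA : ∀ t ∈ Set.Ioo a b, deriv (fun s : ℝ => ∑ i, q i s) t = 0 := by
    intro t ht
    rw [deriv_fun_sum (fun i _ => hdiff i t ht)]
    have key := rdc_tri_sum
      (fun j m n => 1 / ((q j t - q m t) * (q j t - q n t)))
      (fun a' b' c' h1 h2 =>
        rdc_key0 (q a' t) (q b' t) (q c' t)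
          (hdist t ht a' b' (ne_of_lt h1))
          (hdist t ht a' c' (ne_of_lt (h1.trans h2)))
          (hdist t ht b' c' (ne_of_lt h2)))
    calc ∑ j, deriv (q j) t
        = ∑ j, -6 * ∑ p ∈ Finset.univ.filter
            (fun p : Fin N × Fin N => p.1 < p.2 ∧ p.1 ≠ j ∧ p.2 ≠ j),
          1 / ((q j t - q p.1 t) * (q j t - q p.2 t)) :=
          Finset.sum_congr rfl fun j _ => hdyn t ht j
      _ = -6 * ∑ j, ∑ p ∈ Finset.univ.filter
            (fun p : Fin N × Fin N => p.1 < p.2 ∧ p.1 ≠ j ∧ p.2 ≠ j),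
          1 / ((q j t - q p.1 t) * (q j t - q p.2 t)) := by
          rw [Finset.mul_sum]
      _ = 0 := by rw [key]; ring
  have hB : ∀ t ∈ Set.Ioo a b, deriv (fun s : ℝ => ∑ i, (q i s) ^ 2) t = 0 := by
    intro t ht
    have hdsq : ∀ i : Fin N, deriv (fun s : ℝ => (q i s) ^ 2) t
        = 2 * (q i t * deriv (q i) t) := by
      intro i
      have h := ((hdiff i t ht).hasDerivAt.fun_mul (hdiff i t ht).hasDerivAt)
      have h2 : HasDerivAt (fun s : ℝ => (q i s) ^ 2)
          (deriv (q i) t * q i t + q i t * deriv (q i) t) t := by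
        have e : (fun s : ℝ => (q i s) ^ 2) = fun s => q i s * q i s := by
          funext s; ring
        rw [e]; exact h
      rw [h2.deriv]; ring
    rw [deriv_fun_sum (fun i _ => (hdiff i t ht).fun_pow 2)]
    have key := rdc_tri_sum
      (fun j m n => q j t * (1 / ((q j t - q m t) * (q j t - q n t))))
      (fun a' b' c' h1 h2 =>
        rdc_key1 (q a' t) (q b' t) (q c' t)
          (hdist t ht a' b' (ne_of_lt h1))
          (hdist t ht a' c' (ne_of_lt (h1.trans h2)))
          (hdist t ht b' c' (ne_of_lt h2)))
    calc ∑ i, deriv (fun s : ℝ => (q i s) ^ 2) t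
        = ∑ j, (-12) * (q j t * ∑ p ∈ Finset.univ.filter
            (fun p : Fin N × Fin N => p.1 < p.2 ∧ p.1 ≠ j ∧ p.2 ≠ j),
          1 / ((q j t - q p.1 t) * (q j t - q p.2 t))) := by
          refine Finset.sum_congr rfl fun j _ => ?_
          rw [hdsq j, hdyn t ht j]; ring
      _ = (-12) * ∑ j, ∑ p ∈ Finset.univ.filter
            (fun p : Fin N × Fin N => p.1 < p.2 ∧ p.1 ≠ j ∧ p.2 ≠ j),
          q j t * (1 / ((q j t - q p.1 t) * (q j t - q p.2 t))) := by
          rw [Finset.mul_sum]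
          exact Finset.sum_congr rfl fun j _ => by rw [Finset.mul_sum]
      _ = 0 := by rw [key]; ring
  refine ⟨hA, hB, fun t₁ h1 t₂ h2 => ⟨?_, ?_⟩⟩
  · exact rdc_const_of (fun s => ∑ i, q i s)
      (fun t ht => DifferentiableAt.fun_sum (fun i _ => hdiff i t ht)) hA t₁ h1 t₂ h2
  · exact rdc_const_of (fun s => ∑ i, (q i s) ^ 2)
      (fun t ht => DifferentiableAt.fun_sum (fun i _ => (hdiff i t ht).pow 2)) hB t₁ h1 t₂ h2
end

section
/- Let N ≥ 1 and let a_1, …, a_N be complex numbers (the initial roots). Define the constants C_k = (−1)^k e_k(a_1, …, a_N) for k = 1, …, N, where e_k is the k-th elementary symmetric polynomial, and set ℙ_N(t,z) = P_N(t,z) + C_1 P_{N−1}(t,z) + ⋯ + C_N P_0(t,z). Then ℙ_N satisfies ∂_t ℙ_N = ∂_z³ ℙ_N for all complex t and z, and ℙ_N(0,z) = ∏_{i=1}^N (z − a_i); hence ℙ_N solves the initial value problem for the σ-flow with initial roots a_1, …, a_N. -/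
/-- The `k`-th elementary symmetric polynomial of `a_1, …, a_N`. -/
noncomputable def esymmOf {N : ℕ} (a : Fin N → ℂ) (k : ℕ) : ℂ :=
  ∑ S ∈ Finset.powersetCard k (Finset.univ : Finset (Fin N)), ∏ i ∈ S, a i

lemma derivA_val (N : ℕ) (t z : ℂ) :
    (N.factorial : ℂ) * ∑ k ∈ Finset.range (N / 3 + 1),
      t ^ k * (((N - 3 * k : ℕ) : ℂ) * z ^ (N - 3 * k - 1)) /
        ((k.factorial : ℂ) * ((N - 3 * k).factorial : ℂ))
    = (N : ℂ) * ghP (N - 1) t z := by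
  rcases N with _ | n
  · simp [ghP]
  · unfold ghP
    simp only [Nat.succ_sub_one]
    rw [← Finset.sum_subset (Finset.range_subset_range.2 (by omega : n / 3 + 1 ≤ (n+1) / 3 + 1))
        (fun x hx hx' => by
          have h0 : n + 1 - 3 * x = 0 := by
            simp only [Finset.mem_range] at hx hx'
            omega
          simp [h0])]
    rw [Finset.mul_sum, Finset.mul_sum, Finset.mul_sum]
    refine Finset.sum_congr rfl fun k hk => ?_
    simp only [Finset.mem_range] at hk
    have h3 : 3 * k ≤ n := by omega
    have h1 : n + 1 - 3 * k = (n - 3 * k) + 1 := by omega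
    rw [h1, Nat.add_sub_cancel]
    simp only [Nat.factorial_succ]
    have hk' : ((k.factorial : ℂ)) ≠ 0 := Nat.cast_ne_zero.2 k.factorial_ne_zero
    have he' : (((n - 3 * k).factorial : ℂ)) ≠ 0 := Nat.cast_ne_zero.2 (n - 3 * k).factorial_ne_zero
    push_cast
    simp only [mul_div_assoc']
    rw [div_eq_div_iff (mul_ne_zero hk' (mul_ne_zero (Nat.cast_add_one_ne_zero _) he'))
      (mul_ne_zero hk' he')]
    ring

lemma derivB_val (N : ℕ) (t z : ℂ) :
    (N.factorial : ℂ) * ∑ k ∈ Finset.range (N / 3 + 1),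
      ((k : ℂ) * t ^ (k - 1)) * z ^ (N - 3 * k) / ((k.factorial : ℂ) * ((N - 3 * k).factorial : ℂ))
    = (N : ℂ) * ((N - 1 : ℕ) : ℂ) * ((N - 2 : ℕ) : ℂ) * ghP (N - 3) t z := by
  rcases lt_or_ge N 3 with h | h
  · have h3 : N / 3 = 0 := Nat.div_eq_of_lt h
    have h2 : N - 2 = 0 := by omega
    rw [h3, h2]
    simp
  · obtain ⟨m, rfl⟩ := Nat.exists_eq_add_of_le' h
    have hd : (m + 3) / 3 = m / 3 + 1 := by omega
    rw [hd, Finset.sum_range_succ']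
    have hfacN : (m + 3).factorial = (m + 3) * ((m + 2) * ((m + 1) * m.factorial)) := by
      rw [show m + 3 = (m + 2) + 1 from rfl, Nat.factorial_succ,
        show m + 2 = (m + 1) + 1 from rfl, Nat.factorial_succ, Nat.factorial_succ]
    have h1 : m + 3 - 1 = m + 2 := by omega
    have h2 : m + 3 - 2 = m + 1 := by omega
    have h3 : m + 3 - 3 = m := by omega
    rw [h1, h2, h3]
    unfold ghP
    simp only [Nat.cast_zero, zero_mul, mul_zero, zero_div, add_zero, zero_add]
    simp only [Finset.mul_sum, Nat.add_sub_cancel]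
    refine Finset.sum_congr rfl fun j hj => ?_
    have he : m + 3 - 3 * (j + 1) = m - 3 * j := by omega
    rw [he, hfacN]
    simp only [Nat.factorial_succ]
    have hj' : ((j.factorial : ℂ)) ≠ 0 := Nat.cast_ne_zero.2 j.factorial_ne_zero
    have he' : (((m - 3 * j).factorial : ℂ)) ≠ 0 := Nat.cast_ne_zero.2 (m - 3 * j).factorial_ne_zero
    push_cast
    simp only [mul_div_assoc']
    rw [div_eq_div_iff (mul_ne_zero (mul_ne_zero (Nat.cast_add_one_ne_zero _) hj') he')
      (mul_ne_zero hj' he')]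
    ring

lemma ghP_hasDerivAt_z (M : ℕ) (t z : ℂ) :
    HasDerivAt (fun w : ℂ => ghP M t w) ((M : ℂ) * ghP (M - 1) t z) z := by
  rw [← derivA_val M t z]
  unfold ghP
  exact (HasDerivAt.fun_sum fun k _ =>
    ((hasDerivAt_pow (M - 3 * k) z).const_mul (t ^ k)).div_const _).const_mul _

lemma ghP_hasDerivAt_t (M : ℕ) (t z : ℂ) :
    HasDerivAt (fun s : ℂ => ghP M s z)
      ((M : ℂ) * ((M - 1 : ℕ) : ℂ) * ((M - 2 : ℕ) : ℂ) * ghP (M - 3) t z) t := by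
  rw [← derivB_val M t z]
  unfold ghP
  exact (HasDerivAt.fun_sum fun k _ =>
    ((hasDerivAt_pow k t).mul_const (z ^ (M - 3 * k))).div_const _).const_mul _

lemma ghP_at_zero (M : ℕ) (z : ℂ) : ghP M 0 z = z ^ M := by
  unfold ghP
  rw [Finset.sum_eq_single 0 (fun b _ hb => by simp [zero_pow hb])
    (fun h => absurd (Finset.mem_range.2 (by omega)) h)]
  have : ((M.factorial : ℂ)) ≠ 0 := Nat.cast_ne_zero.2 M.factorial_ne_zero
  field_simp
  simp
  field_simp

lemma vieta (N : ℕ) (a : Fin N → ℂ) (z : ℂ) :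
    (∏ i, (z - a i)) = ∑ j ∈ Finset.range (N + 1), (-1) ^ j * esymmOf a j * z ^ (N - j) := by
  have h := congrArg (Polynomial.eval z)
    (Multiset.prod_X_sub_X_eq_sum_esymm ((Finset.univ.val.map a) : Multiset ℂ))
  have hc : Multiset.card (Finset.univ.val.map a) = N := by simp
  rw [hc] at h
  rw [Polynomial.eval_multiset_prod, Multiset.map_map] at h
  rw [Polynomial.eval_finset_sum] at h
  simp only [Function.comp, Polynomial.eval_sub, Polynomial.eval_X, Polynomial.eval_C,
    Polynomial.eval_mul, Polynomial.eval_pow, Polynomial.eval_neg, Polynomial.eval_one] at h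
  have heq : ∀ j, (Finset.univ.val.map a).esymm j = esymmOf a j := by
    intro j
    rw [Finset.esymm_map_val]
    rfl
  simp only [heq] at h
  have hl : (∏ i, (z - a i))
      = (Multiset.map (fun x => z - x) (Multiset.map a Finset.univ.val)).prod := by
    rw [Multiset.map_map]
    rfl
  rw [hl, h]
  exact Finset.sum_congr rfl fun j _ => by ring

/-- With `C_k = (−1)^k e_k(a_1, …, a_N)` and
`ℙ_N(t,z) = P_N(t,z) + C_1 P_{N−1}(t,z) + ⋯ + C_N P_0(t,z)`, the polynomial `ℙ_N`
satisfies `∂_t ℙ_N = ∂_z³ ℙ_N` and `ℙ_N(0,z) = ∏_i (z − a_i)`: it solves the initial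
value problem for the σ-flow with initial roots `a_1, …, a_N`. -/
theorem sigma_flow_initial_value_problem (N : ℕ) (hN : 1 ≤ N) (a : Fin N → ℂ)
    (C : ℕ → ℂ) (hC : ∀ k, C k = (-1) ^ k * esymmOf a k)
    (P : ℂ → ℂ → ℂ)
    (hP : ∀ t z : ℂ, P t z = ghP N t z + ∑ k ∈ Finset.Icc 1 N, C k * ghP (N - k) t z) :
    (∀ t z : ℂ,
      deriv (fun s : ℂ => P s z) t = iteratedDeriv 3 (fun w : ℂ => P t w) z) ∧
    (∀ z : ℂ, P 0 z = ∏ i, (z - a i)) := by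
  constructor
  · intro t z
    -- the t-derivative
    have hPt : (fun s : ℂ => P s z)
        = fun s => ghP N s z + ∑ k ∈ Finset.Icc 1 N, C k * ghP (N - k) s z :=
      funext fun s => hP s z
    have ht : HasDerivAt (fun s : ℂ => P s z)
        ((N : ℂ) * ((N - 1 : ℕ) : ℂ) * ((N - 2 : ℕ) : ℂ) * ghP (N - 3) t z
          + ∑ k ∈ Finset.Icc 1 N, C k * (((N - k : ℕ) : ℂ) * ((N - k - 1 : ℕ) : ℂ)
              * ((N - k - 2 : ℕ) : ℂ) * ghP (N - k - 3) t z)) t := by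
      rw [hPt]
      exact (ghP_hasDerivAt_t N t z).add
        (HasDerivAt.fun_sum fun k _ => (ghP_hasDerivAt_t (N - k) t z).const_mul (C k))
    rw [ht.deriv]
    -- the z-derivatives
    have hz1 : ∀ w : ℂ, HasDerivAt (fun w : ℂ => P t w)
        ((N : ℂ) * ghP (N - 1) t w
          + ∑ k ∈ Finset.Icc 1 N, C k * (((N - k : ℕ) : ℂ) * ghP (N - k - 1) t w)) w := by
      intro w
      have h0 : (fun w : ℂ => P t w)
          = fun w => ghP N t w + ∑ k ∈ Finset.Icc 1 N, C k * ghP (N - k) t w :=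
        funext fun w => hP t w
      rw [h0]
      exact (ghP_hasDerivAt_z N t w).add
        (HasDerivAt.fun_sum fun k _ => (ghP_hasDerivAt_z (N - k) t w).const_mul (C k))
    have e1 : deriv (fun w : ℂ => P t w)
        = fun w => (N : ℂ) * ghP (N - 1) t w
          + ∑ k ∈ Finset.Icc 1 N, C k * (((N - k : ℕ) : ℂ) * ghP (N - k - 1) t w) :=
      funext fun w => (hz1 w).deriv
    have hz2 : ∀ w : ℂ, HasDerivAt
        (fun w : ℂ => (N : ℂ) * ghP (N - 1) t w
          + ∑ k ∈ Finset.Icc 1 N, C k * (((N - k : ℕ) : ℂ) * ghP (N - k - 1) t w))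
        ((N : ℂ) * (((N - 1 : ℕ) : ℂ) * ghP (N - 2) t w)
          + ∑ k ∈ Finset.Icc 1 N, C k * (((N - k : ℕ) : ℂ)
              * (((N - k - 1 : ℕ) : ℂ) * ghP (N - k - 2) t w))) w :=
      fun w => ((ghP_hasDerivAt_z (N - 1) t w).const_mul _).add
        (HasDerivAt.fun_sum fun k _ =>
          (((ghP_hasDerivAt_z (N - k - 1) t w).const_mul _).const_mul (C k)))
    have e2 : deriv (fun w : ℂ => (N : ℂ) * ghP (N - 1) t w
          + ∑ k ∈ Finset.Icc 1 N, C k * (((N - k : ℕ) : ℂ) * ghP (N - k - 1) t w))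
        = fun w => (N : ℂ) * (((N - 1 : ℕ) : ℂ) * ghP (N - 2) t w)
          + ∑ k ∈ Finset.Icc 1 N, C k * (((N - k : ℕ) : ℂ)
              * (((N - k - 1 : ℕ) : ℂ) * ghP (N - k - 2) t w)) :=
      funext fun w => (hz2 w).deriv
    have hz3 : ∀ w : ℂ, HasDerivAt
        (fun w : ℂ => (N : ℂ) * (((N - 1 : ℕ) : ℂ) * ghP (N - 2) t w)
          + ∑ k ∈ Finset.Icc 1 N, C k * (((N - k : ℕ) : ℂ)
              * (((N - k - 1 : ℕ) : ℂ) * ghP (N - k - 2) t w)))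
        ((N : ℂ) * (((N - 1 : ℕ) : ℂ) * (((N - 2 : ℕ) : ℂ) * ghP (N - 3) t w))
          + ∑ k ∈ Finset.Icc 1 N, C k * (((N - k : ℕ) : ℂ) * (((N - k - 1 : ℕ) : ℂ)
              * (((N - k - 2 : ℕ) : ℂ) * ghP (N - k - 3) t w)))) w :=
      fun w => (((ghP_hasDerivAt_z (N - 2) t w).const_mul _).const_mul _).add
        (HasDerivAt.fun_sum fun k _ =>
          ((((ghP_hasDerivAt_z (N - k - 2) t w).const_mul _).const_mul _).const_mul (C k)))
    rw [show (3 : ℕ) = 2 + 1 from rfl, iteratedDeriv_succ,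
      show (2 : ℕ) = 1 + 1 from rfl, iteratedDeriv_succ, iteratedDeriv_one, e1, e2,
      (hz3 z).deriv]
    congr 1
    · ring
    · exact Finset.sum_congr rfl fun k _ => by ring
  · intro z
    rw [hP, vieta N a z, ghP_at_zero]
    simp only [ghP_at_zero, hC]
    rw [Finset.sum_range_succ']
    have h0 : esymmOf a 0 = 1 := by simp [esymmOf]
    rw [← Finset.Ico_add_one_right_eq_Icc, Finset.sum_Ico_eq_sum_range]
    simp only [h0, pow_zero, one_mul, Nat.sub_zero, Nat.add_sub_cancel]
    rw [add_comm]
    congr 1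
    exact Finset.sum_congr rfl fun i _ => by rw [add_comm 1 i]
end

section
/- Fix N ≥ 1 and a complex number t, and let X(t) be the N×N complex matrix with entries X_{i,i+1} = 1 for i = 1, …, N−1, X_{i,i−2} = −3t(i−1)(i−2) for i = 3, …, N, and all other entries zero. Then the characteristic polynomial of X(t) equals the Gould-Hopper polynomial: det(z·I_N − X(t)) = P_N(t,z) for all complex z. -/
/-- The companion-type matrix `X(t)` (rows/columns indexed by `0, …, N−1`, i.e.
the paper's `1, …, N` shifted by one): superdiagonal entries are `1`, the entries
two below the diagonal are `−3t(i−1)(i−2)` (paper indexing, i.e. `−3t·i·(i−1)` in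
0-based indexing), and all other entries vanish. -/
noncomputable def ghX (N : ℕ) (t : ℂ) : Matrix (Fin N) (Fin N) ℂ :=
  fun i j =>
    if (j : ℕ) = (i : ℕ) + 1 then 1
    else if (j : ℕ) + 2 = (i : ℕ) then -3 * t * ((i : ℕ) : ℂ) * (((i : ℕ) : ℂ) - 1)
    else 0

namespace GHaux


def fM (t z : ℂ) (i j : ℕ) : ℂ :=
  if j = i then z else if j = i + 1 then -1
  else if j + 2 = i then 3 * t * (i : ℂ) * ((i : ℂ) - 1) else 0

lemma fM_diag (t z : ℂ) (i : ℕ) : fM t z i i = z := by simp [fM]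

lemma fM_super (t z : ℂ) (i : ℕ) : fM t z i (i+1) = -1 := by
  unfold fM; rw [if_neg (by omega), if_pos rfl]

lemma fM_low (t z : ℂ) (j : ℕ) :
    fM t z (j+2) j = 3 * t * ((j:ℂ)+2) * ((j:ℂ)+1) := by
  unfold fM; rw [if_neg (by omega), if_neg (by omega), if_pos rfl]
  push_cast; ring

lemma fM_zero (t z : ℂ) {i j : ℕ} (h1 : j ≠ i) (h2 : j ≠ i+1) (h3 : j+2 ≠ i) :
    fM t z i j = 0 := by
  unfold fM; rw [if_neg h1, if_neg h2, if_neg h3]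

noncomputable def mM (N : ℕ) (t z : ℂ) : Matrix (Fin N) (Fin N) ℂ :=
  Matrix.of fun i j => fM t z (i : ℕ) (j : ℕ)

lemma coe_succAbove {n : ℕ} (p : Fin (n+1)) (i : Fin n) :
    ((p.succAbove i : Fin (n+1)) : ℕ) = if (i:ℕ) < p then (i:ℕ) else i+1 := by
  rw [Fin.succAbove]
  split_ifs with h h2 h3 <;> simp_all [Fin.lt_def]

lemma mM_eq (N : ℕ) (t z : ℂ) :
    z • (1 : Matrix (Fin N) (Fin N) ℂ) - ghX N t = mM N t z := by
  ext i j
  simp only [Matrix.sub_apply, Matrix.smul_apply, Matrix.one_apply, ghX, mM, Matrix.of_apply,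
    fM, smul_eq_mul, Fin.ext_iff]
  split_ifs <;> first | ring1 | (exfalso; omega)

lemma submatrix_last (n : ℕ) (t z : ℂ) :
    (mM (n+1) t z).submatrix (Fin.last n).succAbove (Fin.last n).succAbove = mM n t z := by
  ext i j
  simp [mM, Matrix.submatrix_apply, Fin.succAbove_last, fM]

lemma neg_one_pow_even {m : ℕ} (h : Even m) : ((-1:ℂ))^m = 1 := Even.neg_one_pow h

lemma detB (n : ℕ) (t z : ℂ) :
    ((mM (n+3) t z).submatrix (Fin.last (n+2)).succAbove
      ((⟨n, by omega⟩ : Fin (n+3)).succAbove)).det = (mM n t z).det := by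
  set B := (mM (n+3) t z).submatrix (Fin.last (n+2)).succAbove
      ((⟨n, by omega⟩ : Fin (n+3)).succAbove) with hBdef
  have hB : ∀ (i k : Fin (n+2)), B i k = fM t z i (if (k:ℕ) < n then (k:ℕ) else (k:ℕ)+1) := by
    intro i k
    simp [hBdef, Matrix.submatrix_apply, Fin.succAbove_last, coe_succAbove, mM]
  -- expand B along last column
  rw [Matrix.det_succ_column B (Fin.last (n+1))]
  set C := B.submatrix (Fin.last (n+1)).succAbove (Fin.last (n+1)).succAbove with hCdef
  have hC : ∀ (i k : Fin (n+1)), C i k = fM t z i (if (k:ℕ) < n then (k:ℕ) else (k:ℕ)+1) := by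
    intro i k
    rw [hCdef, Matrix.submatrix_apply, Fin.succAbove_last, hB]
    simp
  rw [Finset.sum_eq_single (Fin.last (n+1))]
  · have hent : B (Fin.last (n+1)) (Fin.last (n+1)) = -1 := by
      rw [hB]; simp only [Fin.val_last]
      rw [if_neg (by omega)]
      exact fM_super t z (n+1)
    rw [hent, ← hCdef]
    have he : ((-1:ℂ))^(((Fin.last (n+1) : Fin (n+2)):ℕ) + ((Fin.last (n+1) : Fin (n+2)):ℕ)) = 1 :=
      neg_one_pow_even ⟨n+1, by simp⟩
    rw [he]
    -- now goal: 1 * -1 * C.det = (mM n t z).det; expand C along last column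
    rw [Matrix.det_succ_column C (Fin.last n)]
    set D := C.submatrix (Fin.last n).succAbove (Fin.last n).succAbove with hDdef
    have hD : D = mM n t z := by
      ext i k
      rw [hDdef, Matrix.submatrix_apply, Fin.succAbove_last, hC]
      simp [mM, if_pos (Fin.castSucc k).isLt]
    rw [Finset.sum_eq_single (Fin.last n)]
    · have hent2 : C (Fin.last n) (Fin.last n) = -1 := by
        rw [hC]; simp only [Fin.val_last]
        rw [if_neg (by omega)]
        exact fM_super t z n
      rw [hent2, ← hDdef, hD]
      have he2 : ((-1:ℂ))^(((Fin.last n : Fin (n+1)):ℕ) + ((Fin.last n : Fin (n+1)):ℕ)) = 1 :=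
        neg_one_pow_even ⟨n, by simp⟩
      rw [he2]; ring
    · intro b _ hb
      have hbn : (b:ℕ) ≠ n := by
        intro h; exact hb (Fin.ext (by simp [h]))
      have hent2 : C b (Fin.last n) = 0 := by
        rw [hC]; simp only [Fin.val_last]
        rw [if_neg (by omega)]
        exact fM_zero t z (by omega) (by omega) (by omega)
      rw [hent2]; ring
    · intro h; exact absurd (Finset.mem_univ _) h
  · intro b _ hb
    have hbn : (b:ℕ) ≠ n+1 := by
      intro h; exact hb (Fin.ext (by simp [h]))
    have hblt : (b:ℕ) < n+2 := b.isLt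
    have hent : B b (Fin.last (n+1)) = 0 := by
      rw [hB]; simp only [Fin.val_last]
      rw [if_neg (by omega)]
      exact fM_zero t z (by omega) (by omega) (by omega)
    rw [hent]; ring
  · intro h; exact absurd (Finset.mem_univ _) h

lemma det_rec (n : ℕ) (t z : ℂ) :
    (mM (n+3) t z).det =
      z * (mM (n+2) t z).det + 3*t*((n:ℂ)+2)*((n:ℂ)+1) * (mM n t z).det := by
  rw [Matrix.det_succ_row (mM (n+3) t z) (Fin.last (n+2))]
  have hne : (⟨n, by omega⟩ : Fin (n+3)) ≠ Fin.last (n+2) := by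
    simp [Fin.ext_iff]
  have hzero : ∀ j ∈ (Finset.univ : Finset (Fin (n+3))),
      j ∉ ({(⟨n, by omega⟩ : Fin (n+3)), Fin.last (n+2)} : Finset (Fin (n+3))) →
      (-1:ℂ)^(((Fin.last (n+2) : Fin (n+3)):ℕ) + (j:ℕ)) * (mM (n+3) t z) (Fin.last (n+2)) j *
        ((mM (n+3) t z).submatrix (Fin.last (n+2)).succAbove j.succAbove).det = 0 := by
    intro j _ hj
    simp only [Finset.mem_insert, Finset.mem_singleton, not_or] at hj
    have h1 : (j:ℕ) ≠ n := by
      intro h; exact hj.1 (Fin.ext (by simp [h]))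
    have h2 : (j:ℕ) ≠ n+2 := by
      intro h; exact hj.2 (Fin.ext (by simp [h]))
    have h3 : (j:ℕ) < n+3 := j.isLt
    have hent : (mM (n+3) t z) (Fin.last (n+2)) j = 0 := by
      simp only [mM, Matrix.of_apply, Fin.val_last]
      exact fM_zero t z (by omega) (by omega) (by omega)
    rw [hent]; ring
  rw [← Finset.sum_subset (Finset.subset_univ _) hzero, Finset.sum_pair hne]
  -- term at jn
  have hentn : (mM (n+3) t z) (Fin.last (n+2)) (⟨n, by omega⟩ : Fin (n+3)) =
      3 * t * ((n:ℂ)+2) * ((n:ℂ)+1) := by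
    simp only [mM, Matrix.of_apply, Fin.val_last]
    exact fM_low t z n
  have hen : ((-1:ℂ))^(((Fin.last (n+2) : Fin (n+3)):ℕ) + ((⟨n, by omega⟩ : Fin (n+3)):ℕ)) = 1 := by
    simp only [Fin.val_last]
    exact neg_one_pow_even ⟨n+1, by ring⟩
  have hentl : (mM (n+3) t z) (Fin.last (n+2)) (Fin.last (n+2)) = z := by
    simp only [mM, Matrix.of_apply, Fin.val_last]
    exact fM_diag t z (n+2)
  have hel : ((-1:ℂ))^(((Fin.last (n+2) : Fin (n+3)):ℕ) + ((Fin.last (n+2) : Fin (n+3)):ℕ)) = 1 := by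
    simp only [Fin.val_last]
    exact neg_one_pow_even ⟨n+2, by ring⟩
  rw [hentn, hen, hentl, hel, detB n t z,
    show (mM (n+3) t z).submatrix (Fin.last (n+2)).succAbove (Fin.last (n+2)).succAbove
      = mM (n+2) t z from submatrix_last (n+2) t z]
  ring



noncomputable def ghQ (N : ℕ) (t z : ℂ) : ℂ :=
  ∑ k ∈ Finset.range (N+1),
    if 3*k ≤ N then (N.factorial:ℂ) * t^k * z^(N-3*k) / ((k.factorial:ℂ) * ((N-3*k).factorial:ℂ)) else 0

lemma fact_ne (k : ℕ) : ((k.factorial : ℂ)) ≠ 0 := by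
  exact_mod_cast k.factorial_ne_zero

lemma cast_succ_ne (k : ℕ) : ((k:ℂ)+1) ≠ 0 := by
  have : (((k+1:ℕ)):ℂ) ≠ 0 := Nat.cast_ne_zero.mpr (Nat.succ_ne_zero k)
  push_cast at this
  exact this

lemma key_term (n k : ℕ) (t z : ℂ) :
    (if 3*(k+1) ≤ n+3 then ((n+3).factorial:ℂ) * t^(k+1) * z^(n+3-3*(k+1)) / (((k+1).factorial:ℂ) * ((n+3-3*(k+1)).factorial:ℂ)) else 0)
    = z * (if 3*(k+1) ≤ n+2 then ((n+2).factorial:ℂ) * t^(k+1) * z^(n+2-3*(k+1)) / (((k+1).factorial:ℂ) * ((n+2-3*(k+1)).factorial:ℂ)) else 0)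
    + 3*t*((n:ℂ)+2)*((n:ℂ)+1) * (if 3*k ≤ n then ((n).factorial:ℂ) * t^k * z^(n-3*k) / (((k).factorial:ℂ) * ((n-3*k).factorial:ℂ)) else 0) := by
  by_cases h : 3*k ≤ n
  · obtain ⟨m, rfl⟩ : ∃ m, n = 3*k + m := ⟨n - 3*k, by omega⟩
    cases m with
    | zero =>
      rw [if_pos (by omega), if_neg (by omega), if_pos (by omega)]
      rw [show 3*k+0+3-3*(k+1) = 0 by omega, show 3*k+0-3*k = 0 by omega]
      have e1 : (((3*k+0+3).factorial : ℕ) : ℂ)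
          = (3*(k:ℂ)+3) * (3*(k:ℂ)+2) * (3*(k:ℂ)+1) * (((3*k+0).factorial : ℕ) : ℂ) := by
        rw [show 3*k+0+3 = ((3*k+0+1)+1)+1 by omega, Nat.factorial_succ, Nat.factorial_succ,
          show 3*k+0+1 = (3*k+0)+1 by omega, Nat.factorial_succ]
        push_cast; ring
      have e2 : (((k+1).factorial : ℕ) : ℂ) = ((k:ℂ)+1) * ((k.factorial : ℕ) : ℂ) := by
        rw [Nat.factorial_succ]; push_cast; ring
      rw [e1, e2]
      field_simp [fact_ne, cast_succ_ne]
      push_cast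
      ring
    | succ m' =>
      rw [if_pos (by omega), if_pos (by omega), if_pos (by omega)]
      rw [show 3*k+(m'+1)+3-3*(k+1) = m'+1 by omega, show 3*k+(m'+1)+2-3*(k+1) = m' by omega,
        show 3*k+(m'+1)-3*k = m'+1 by omega]
      have e1 : (((3*k+(m'+1)+3).factorial : ℕ) : ℂ)
          = (3*(k:ℂ)+(m':ℂ)+4) * (3*(k:ℂ)+(m':ℂ)+3) * (3*(k:ℂ)+(m':ℂ)+2) * (((3*k+(m'+1)).factorial : ℕ) : ℂ) := by
        rw [show 3*k+(m'+1)+3 = (((3*k+(m'+1))+1)+1)+1 by omega, Nat.factorial_succ,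
          Nat.factorial_succ, Nat.factorial_succ]
        push_cast; ring
      have e2 : (((3*k+(m'+1)+2).factorial : ℕ) : ℂ)
          = (3*(k:ℂ)+(m':ℂ)+3) * (3*(k:ℂ)+(m':ℂ)+2) * (((3*k+(m'+1)).factorial : ℕ) : ℂ) := by
        rw [show 3*k+(m'+1)+2 = ((3*k+(m'+1))+1)+1 by omega, Nat.factorial_succ, Nat.factorial_succ]
        push_cast; ring
      have e4 : (((k+1).factorial : ℕ) : ℂ) = ((k:ℂ)+1) * ((k.factorial : ℕ) : ℂ) := by
        rw [Nat.factorial_succ]; push_cast; ring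
      have e5 : (((m'+1).factorial : ℕ) : ℂ) = ((m':ℂ)+1) * ((m'.factorial : ℕ) : ℂ) := by
        rw [Nat.factorial_succ]; push_cast; ring
      rw [e1, e2, e4, e5, pow_succ z m']
      field_simp [fact_ne, cast_succ_ne]
      push_cast
      ring
  · rw [if_neg h, if_neg (by omega), if_neg (by omega)]
    ring

lemma ghQ_rec (n : ℕ) (t z : ℂ) :
    ghQ (n+3) t z = z * ghQ (n+2) t z + 3*t*((n:ℂ)+2)*((n:ℂ)+1) * ghQ n t z := by
  unfold ghQ
  rw [Finset.sum_range_succ' _ (n+3)]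
  rw [Finset.sum_congr rfl (fun k _ => key_term n k t z)]
  rw [Finset.sum_add_distrib]
  -- split the zG-sum at its top (zero) term
  rw [show (n+3) = (n+2)+1 from rfl]
  rw [Finset.sum_range_succ
    (fun k => z * (if 3*(k+1) ≤ n+2 then ((n+2).factorial:ℂ) * t^(k+1) * z^(n+2-3*(k+1)) / (((k+1).factorial:ℂ) * ((n+2-3*(k+1)).factorial:ℂ)) else 0)) (n+2)]
  rw [if_neg (show ¬(3*((n+2)+1) ≤ n+2) by omega), mul_zero, add_zero]
  -- RHS: z * ghQ (n+2)
  rw [Finset.mul_sum, Finset.mul_sum]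
  rw [Finset.sum_range_succ'
    (fun k => z * (if 3*k ≤ n+2 then ((n+2).factorial:ℂ) * t^k * z^(n+2-3*k) / (((k).factorial:ℂ) * ((n+2-3*k).factorial:ℂ)) else 0)) (n+2)]
  -- RHS: extend the H-sum from range (n+1) to range (n+2+1)
  have hc : (∑ k ∈ Finset.range (n+1),
      3*t*((n:ℂ)+2)*((n:ℂ)+1) * (if 3*k ≤ n then ((n).factorial:ℂ) * t^k * z^(n-3*k) / (((k).factorial:ℂ) * ((n-3*k).factorial:ℂ)) else 0))
      = ∑ k ∈ Finset.range ((n+2)+1), 3*t*((n:ℂ)+2)*((n:ℂ)+1) * (if 3*k ≤ n then ((n).factorial:ℂ) * t^k * z^(n-3*k) / (((k).factorial:ℂ) * ((n-3*k).factorial:ℂ)) else 0) := by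
    refine Finset.sum_subset (Finset.range_subset_range.mpr (by omega)) ?_
    intro k _ hk
    rw [Finset.mem_range] at hk
    rw [if_neg (by omega), mul_zero]
  rw [hc]
  -- the zero-index terms agree
  have h0 : (if 3*0 ≤ n+3 then ((n+3).factorial:ℂ) * t^0 * z^(n+3-3*0) / (((0:ℕ).factorial:ℂ) * ((n+3-3*0).factorial:ℂ)) else 0)
      = z * (if 3*0 ≤ n+2 then ((n+2).factorial:ℂ) * t^0 * z^(n+2-3*0) / (((0:ℕ).factorial:ℂ) * ((n+2-3*0).factorial:ℂ)) else 0) := by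
    have hne : ((n:ℂ)+3) ≠ 0 := by
      have : (((n+3:ℕ)):ℂ) ≠ 0 := Nat.cast_ne_zero.mpr (by omega)
      push_cast at this; exact this
    rw [if_pos (by omega), if_pos (by omega), show n+3-3*0 = (n+2)+1 by omega,
      show n+2-3*0 = n+2 by omega, pow_succ z (n+2),
      show n+3 = (n+2)+1 from rfl, Nat.factorial_succ]
    push_cast
    have h2 : ((n:ℂ)+2+1) ≠ 0 := by
      exact_mod_cast (Nat.cast_ne_zero (R:=ℂ)).mpr (show n+2+1 ≠ 0 by omega)
    have h3 : (((n+2).factorial:ℕ):ℂ) ≠ 0 := fact_ne (n+2)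
    rw [← mul_div_assoc, div_eq_div_iff (by simp [h2, h3]) (by simp [h3])]
    ring
  rw [h0]
  ring

lemma ghP_eq_ghQ (N : ℕ) (t z : ℂ) : ghP N t z = ghQ N t z := by
  unfold ghP ghQ
  rw [Finset.mul_sum]
  have h1 : ∀ k ∈ Finset.range (N/3+1),
      (N.factorial:ℂ) * (t^k * z^(N-3*k) / ((k.factorial:ℂ) * ((N-3*k).factorial:ℂ)))
      = if 3*k ≤ N then (N.factorial:ℂ) * t^k * z^(N-3*k) / ((k.factorial:ℂ) * ((N-3*k).factorial:ℂ)) else 0 := by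
    intro k hk
    rw [Finset.mem_range] at hk
    rw [if_pos (by omega)]
    ring
  rw [Finset.sum_congr rfl h1]
  refine Finset.sum_subset (Finset.range_subset_range.mpr (by omega)) ?_
  intro k _ hk
  rw [Finset.mem_range] at hk
  rw [if_neg (by omega)]

lemma ghP_rec (n : ℕ) (t z : ℂ) :
    ghP (n+3) t z = z * ghP (n+2) t z + 3*t*((n:ℂ)+2)*((n:ℂ)+1) * ghP n t z := by
  rw [ghP_eq_ghQ, ghP_eq_ghQ, ghP_eq_ghQ]
  exact ghQ_rec n t z

lemma det0 (t z : ℂ) : (mM 0 t z).det = 1 := Matrix.det_fin_zero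

lemma det1 (t z : ℂ) : (mM 1 t z).det = z := by
  rw [Matrix.det_fin_one]
  simp [mM, fM]

lemma det2 (t z : ℂ) : (mM 2 t z).det = z^2 := by
  rw [Matrix.det_fin_two]
  norm_num [mM, fM]
  ring

lemma ghP0 (t z : ℂ) : ghP 0 t z = 1 := by
  simp [ghP]

lemma ghP1 (t z : ℂ) : ghP 1 t z = z := by
  simp [ghP, Finset.sum_range_one]

lemma ghP2 (t z : ℂ) : ghP 2 t z = z^2 := by
  simp [ghP, Finset.sum_range_one, Nat.factorial]
  ring

lemma main (t z : ℂ) : ∀ N, (mM N t z).det = ghP N t z := by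
  intro N
  induction N using Nat.strong_induction_on with
  | _ N ih =>
    match N, ih with
    | 0, _ => rw [det0, ghP0]
    | 1, _ => rw [det1, ghP1]
    | 2, _ => rw [det2, ghP2]
    | (n+3), ih =>
      rw [det_rec, ih (n+2) (by omega), ih n (by omega), ghP_rec]

end GHaux

/-- `det(z·I_N − X(t)) = P_N(t,z)`: the characteristic polynomial of `X(t)` is the
Gould-Hopper polynomial. -/
theorem ghX_charpoly (N : ℕ) (hN : 1 ≤ N) (t z : ℂ) :
    Matrix.det (z • (1 : Matrix (Fin N) (Fin N) ℂ) - ghX N t) = ghP N t z := by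
  rw [GHaux.mM_eq]
  exact GHaux.main t z N
end

section
/- Fix N ≥ 1 and complex constants Γ_0 = 1, Γ_1, …, Γ_N, and define the polynomial A(λ) = ∑_{k=0}^N (Γ_k / k!) λ^k. Let (α_n)_{n≥0} be complex numbers such that A'(λ) = A(λ) · ∑_{n=0}^∞ α_n λ^n / n! as formal power series in λ. Define the 2D Appell polynomials by 𝔾_n(z,t) = ∑_{h=0}^n C(n, n−h) Γ_{n−h} P_h(t,z) for 0 ≤ n ≤ N, where C(a,b) is the binomial coefficient. Then 𝔾_0(z,t) = 1 and for every 1 ≤ n ≤ N the recurrence 𝔾_n(z,t) = (z + α_0) 𝔾_{n−1}(z,t) + 3t(n−1)(n−2) 𝔾_{n−3}(z,t) + ∑_{k=0}^{n−2} C(n−1, k) α_{n−k−1} 𝔾_k(z,t) holds for all complex z and t (with the convention 𝔾_{n−3} = 0 when n < 3). -/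
/-- The 2D Appell polynomials `𝔾_n(z,t) = ∑_{h=0}^n C(n, n−h) Γ_{n−h} P_h(t,z)`. -/
noncomputable def appell2D (Γ : ℕ → ℂ) (n : ℕ) (z t : ℂ) : ℂ :=
  ∑ h ∈ Finset.range (n + 1), (n.choose (n - h) : ℂ) * Γ (n - h) * ghP h t z

open Finset PowerSeries

noncomputable def ghE (t z : ℂ) (n : ℕ) : ℂ :=
  ∑ k ∈ Finset.range (n / 3 + 1),
    t ^ k * z ^ (n - 3 * k) / ((k.factorial : ℂ) * ((n - 3 * k).factorial : ℂ))

lemma sum_range_guard {M m : ℕ} (h : m ≤ M) (F : ℕ → ℂ) :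
    (∑ k ∈ Finset.range M, (if k < m then F k else 0)) = ∑ k ∈ Finset.range m, F k := by
  rw [← Finset.sum_filter]
  congr 1
  ext x
  simp only [Finset.mem_filter, Finset.mem_range]
  omega

lemma ghE_rec (t z : ℂ) (h : ℕ) :
    ((h : ℂ) + 1) * ghE t z (h + 1) =
      z * ghE t z h + (if 2 ≤ h then 3 * t * ghE t z (h - 2) else 0) := by
  unfold ghE
  rw [Finset.mul_sum]
  have key : ∀ k ∈ Finset.range ((h + 1) / 3 + 1),
      ((h : ℂ) + 1) * (t ^ k * z ^ (h + 1 - 3 * k) /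
          ((k.factorial : ℂ) * ((h + 1 - 3 * k).factorial : ℂ)))
      = (if k < h / 3 + 1 then
            z * (t ^ k * z ^ (h - 3 * k) /
              ((k.factorial : ℂ) * ((h - 3 * k).factorial : ℂ))) else 0)
        + (if 1 ≤ k then
            3 * t * (t ^ (k - 1) * z ^ (h - 2 - 3 * (k - 1)) /
              (((k - 1).factorial : ℂ) * ((h - 2 - 3 * (k - 1)).factorial : ℂ))) else 0) := by
    intro k hk
    rw [Finset.mem_range] at hk
    have h3k : 3 * k ≤ h + 1 := by omega
    have hcast : ((h : ℂ) + 1) = ((h + 1 - 3 * k : ℕ) : ℂ) + ((3 * k : ℕ) : ℂ) := by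
      push_cast [Nat.cast_sub h3k]; ring
    rw [hcast, add_mul]
    congr 1
    · by_cases hc : 3 * k ≤ h
      · rw [if_pos (by omega)]
        have e1 : h + 1 - 3 * k = (h - 3 * k) + 1 := by omega
        rw [e1, pow_succ, Nat.factorial_succ]
        have d1 : ((k.factorial : ℂ)) * (((h - 3 * k + 1) * (h - 3 * k).factorial : ℕ) : ℂ) ≠ 0 :=
          mul_ne_zero (Nat.cast_ne_zero.2 k.factorial_ne_zero)
            (Nat.cast_ne_zero.2 (Nat.mul_ne_zero (Nat.succ_ne_zero _) (h - 3 * k).factorial_ne_zero))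
        have d2 : ((k.factorial : ℂ)) * (((h - 3 * k).factorial : ℕ) : ℂ) ≠ 0 :=
          mul_ne_zero (Nat.cast_ne_zero.2 k.factorial_ne_zero)
            (Nat.cast_ne_zero.2 (h - 3 * k).factorial_ne_zero)
        rw [← mul_div_assoc, ← mul_div_assoc, div_eq_div_iff d1 d2]
        push_cast
        ring
      · rw [if_neg (by omega)]
        have e0 : h + 1 - 3 * k = 0 := by omega
        rw [e0]; simp
    · by_cases hk1 : 1 ≤ k
      · rw [if_pos hk1]
        obtain ⟨k', rfl⟩ : ∃ k', k = k' + 1 := ⟨k - 1, by omega⟩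
        have e2 : h + 1 - 3 * (k' + 1) = h - 2 - 3 * k' := by omega
        simp only [Nat.add_sub_cancel]
        rw [e2, Nat.factorial_succ, pow_succ]
        have d1 : ((((k' + 1) * k'.factorial : ℕ) : ℂ)) * (((h - 2 - 3 * k').factorial : ℕ) : ℂ) ≠ 0 :=
          mul_ne_zero
            (Nat.cast_ne_zero.2 (Nat.mul_ne_zero (Nat.succ_ne_zero _) k'.factorial_ne_zero))
            (Nat.cast_ne_zero.2 (h - 2 - 3 * k').factorial_ne_zero)
        have d2 : ((k'.factorial : ℂ)) * (((h - 2 - 3 * k').factorial : ℕ) : ℂ) ≠ 0 :=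
          mul_ne_zero (Nat.cast_ne_zero.2 k'.factorial_ne_zero)
            (Nat.cast_ne_zero.2 (h - 2 - 3 * k').factorial_ne_zero)
        rw [← mul_div_assoc, ← mul_div_assoc, div_eq_div_iff d1 d2]
        push_cast
        ring
      · have : k = 0 := by omega
        subst this
        simp
  rw [Finset.sum_congr rfl key, Finset.sum_add_distrib]
  congr 1
  · rw [sum_range_guard (by omega), Finset.mul_sum]
  · by_cases h2 : 2 ≤ h
    · rw [if_pos h2]
      rw [show (h + 1) / 3 + 1 = ((h - 2) / 3 + 1) + 1 by omega, Finset.sum_range_succ']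
      simp only [Nat.add_sub_cancel, if_pos (Nat.le_add_left 1 _)]
      norm_num
      rw [Finset.mul_sum]
    · rw [if_neg h2]
      rw [show (h + 1) / 3 + 1 = 1 by omega, Finset.sum_range_one]
      simp

lemma ghP_eq (n : ℕ) (t z : ℂ) : ghP n t z = (n.factorial : ℂ) * ghE t z n := rfl

lemma derivE (t z : ℂ) : d⁄dX ℂ (PowerSeries.mk (ghE t z)) =
    (PowerSeries.C z + PowerSeries.C (3*t) * PowerSeries.X ^ 2) *
      PowerSeries.mk (ghE t z) := by
  ext n
  rw [PowerSeries.coeff_derivative, PowerSeries.coeff_mk, add_mul, map_add,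
    PowerSeries.coeff_C_mul, PowerSeries.coeff_mk, mul_assoc, PowerSeries.coeff_C_mul,
    PowerSeries.coeff_X_pow_mul', PowerSeries.coeff_mk]
  rw [mul_comm, ghE_rec t z n, mul_ite, mul_zero]


/-- With `A(λ) = ∑_{k=0}^N (Γ_k/k!) λ^k`, `Γ_0 = 1`, and `(α_n)` defined by the formal
power series identity `A'(λ) = A(λ) · ∑_n α_n λ^n / n!` (stated here coefficient-wise),
the 2D Appell polynomials satisfy `𝔾_0 = 1` and, for `1 ≤ n ≤ N`, the recurrence
`𝔾_n = (z+α_0) 𝔾_{n−1} + 3t(n−1)(n−2) 𝔾_{n−3} + ∑_{k=0}^{n−2} C(n−1,k) α_{n−k−1} 𝔾_k`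
(with `𝔾_{n−3} = 0` when `n < 3`). -/
theorem appell2D_recurrence (N : ℕ) (hN : 1 ≤ N) (Γ : ℕ → ℂ) (hΓ0 : Γ 0 = 1)
    (α : ℕ → ℂ)
    (hα : ∀ n : ℕ,
      ((n : ℂ) + 1) * (if n + 1 ≤ N then Γ (n + 1) / ((n + 1).factorial : ℂ) else 0) =
        ∑ j ∈ Finset.range (n + 1),
          (if j ≤ N then Γ j / (j.factorial : ℂ) else 0) *
            (α (n - j) / ((n - j).factorial : ℂ))) :
    (∀ z t : ℂ, appell2D Γ 0 z t = 1) ∧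
    (∀ n, 1 ≤ n → n ≤ N → ∀ z t : ℂ,
      appell2D Γ n z t =
        (z + α 0) * appell2D Γ (n - 1) z t +
          3 * t * ((n : ℂ) - 1) * ((n : ℂ) - 2) *
            (if 3 ≤ n then appell2D Γ (n - 3) z t else 0) +
          ∑ k ∈ Finset.range (n - 1),
            ((n - 1).choose k : ℂ) * α (n - k - 1) * appell2D Γ k z t) := by
  constructor
  · intro z t
    simp [appell2D, ghP, hΓ0]
  · intro n hn1 hnN z t
    obtain ⟨m, rfl⟩ : ∃ m, n = m + 1 := ⟨n - 1, by omega⟩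
    set A : PowerSeries ℂ :=
      PowerSeries.mk (fun j => if j ≤ N then Γ j / (j.factorial : ℂ) else 0) with hAdef
    set B : PowerSeries ℂ :=
      PowerSeries.mk (fun n => α n / (n.factorial : ℂ)) with hBdef
    set gg : ℕ → ℂ := fun k => ∑ j ∈ Finset.range (k+1),
      (if j ≤ N then Γ j / (j.factorial : ℂ) else 0) * ghE t z (k - j) with hggdef
    have hGk : ∀ k, PowerSeries.coeff k (A * PowerSeries.mk (ghE t z)) = gg k := by
      intro k
      rw [PowerSeries.coeff_mul, Finset.Nat.sum_antidiagonal_eq_sum_range_succ_mk, hggdef]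
      exact Finset.sum_congr rfl fun j _ => by
        rw [hAdef, PowerSeries.coeff_mk, PowerSeries.coeff_mk]
    have hA' : d⁄dX ℂ A = A * B := by
      ext j
      rw [PowerSeries.coeff_derivative, PowerSeries.coeff_mul,
        Finset.Nat.sum_antidiagonal_eq_sum_range_succ_mk]
      simp only [hAdef, hBdef, PowerSeries.coeff_mk]
      rw [mul_comm]
      exact hα j
    have hG' : d⁄dX ℂ (A * PowerSeries.mk (ghE t z)) =
        (B + PowerSeries.C z + PowerSeries.C (3*t) * PowerSeries.X ^ 2) *
          (A * PowerSeries.mk (ghE t z)) := by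
      rw [Derivation.leibniz, smul_eq_mul, smul_eq_mul, hA', derivE]
      ring
    -- coefficient extraction at m
    have E0 : gg (m+1) * ((m:ℂ)+1) =
        (∑ j ∈ Finset.range (m+1), (α j / (j.factorial : ℂ)) * gg (m - j)) +
          z * gg m + 3*t*(if 2 ≤ m then gg (m-2) else 0) := by
      have hcoef := congrArg (PowerSeries.coeff m) hG'
      rw [PowerSeries.coeff_derivative, hGk] at hcoef
      rw [add_mul, add_mul, map_add, map_add] at hcoef
      rw [PowerSeries.coeff_C_mul, hGk] at hcoef
      rw [mul_assoc, PowerSeries.coeff_C_mul, PowerSeries.coeff_X_pow_mul', hGk] at hcoef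
      rw [PowerSeries.coeff_mul, Finset.Nat.sum_antidiagonal_eq_sum_range_succ_mk] at hcoef
      rw [Finset.sum_congr rfl (fun j _ => by
        rw [hBdef, PowerSeries.coeff_mk, hGk] :
          ∀ j ∈ Finset.range (m+1), _ = (α j / (j.factorial : ℂ)) * gg (m - j))] at hcoef
      rw [hcoef]
    have E1 : gg (m+1) * ((m:ℂ)+1) =
        (∑ j ∈ Finset.range (m+1), (α (m-j) / ((m-j).factorial : ℂ)) * gg j) +
          z * gg m + 3*t*(if 2 ≤ m then gg (m-2) else 0) := by
      rw [E0]
      congr 1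
      congr 1
      conv_rhs => rw [← Finset.sum_range_reflect]
      apply Finset.sum_congr rfl
      intro j hj
      rw [Finset.mem_range] at hj
      rw [show m + 1 - 1 - j = m - j by omega, show m - (m - j) = j by omega]
    have hApp : ∀ k, k ≤ N → appell2D Γ k z t = (k.factorial : ℂ) * gg k := by
      intro k hk
      rw [appell2D, hggdef]
      rw [Finset.mul_sum]
      conv_rhs => rw [← Finset.sum_range_reflect]
      apply Finset.sum_congr rfl
      intro h hh
      rw [Finset.mem_range] at hh
      rw [show k + 1 - 1 - h = k - h by omega, show k - (k - h) = h by omega,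
        if_pos (show k - h ≤ N by omega), ghP_eq]
      have hc : k.choose (k-h) * (k-h).factorial * h.factorial = k.factorial := by
        have h2 := Nat.choose_mul_factorial_mul_factorial (Nat.sub_le k h)
        rwa [show k - (k - h) = h by omega] at h2
      rw [← hc]
      have hne : (((k-h).factorial : ℕ) : ℂ) ≠ 0 := Nat.cast_ne_zero.2 (k-h).factorial_ne_zero
      push_cast
      field_simp
    have hfacm : ∀ j ∈ Finset.range m,
        ((m.factorial : ℂ)) * ((α (m-j) / ((m-j).factorial : ℂ)) * gg j) =
          (m.choose j : ℂ) * α (m-j) * ((j.factorial : ℂ) * gg j) := by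
      intro j hj
      rw [Finset.mem_range] at hj
      have hc : m.choose j * j.factorial * (m-j).factorial = m.factorial :=
        Nat.choose_mul_factorial_mul_factorial (by omega)
      rw [← hc]
      have hne : (((m-j).factorial : ℕ) : ℂ) ≠ 0 := Nat.cast_ne_zero.2 (m-j).factorial_ne_zero
      push_cast
      field_simp
    simp only [show m + 1 - 1 = m from rfl]
    rw [hApp (m+1) hnN, hApp m (by omega)]
    rw [show (∑ k ∈ Finset.range m, ((m.choose k : ℂ)) * α (m + 1 - k - 1) * appell2D Γ k z t)
        = ∑ k ∈ Finset.range m, (m.choose k : ℂ) * α (m-k) * ((k.factorial : ℂ) * gg k) from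
      Finset.sum_congr rfl fun k hk => by
        rw [Finset.mem_range] at hk
        rw [show m + 1 - k - 1 = m - k by omega, hApp k (by omega)]]
    rw [show (if 3 ≤ m + 1 then appell2D Γ (m+1-3) z t else 0)
        = (if 2 ≤ m then ((m-2).factorial : ℂ) * gg (m-2) else 0) from by
      by_cases hm2 : 2 ≤ m
      · rw [if_pos (by omega : 3 ≤ m + 1), if_pos hm2, show m+1-3 = m-2 by omega,
          hApp (m-2) (by omega)]
      · rw [if_neg (by omega : ¬ 3 ≤ m + 1), if_neg hm2]]
    have hfs : ((m+1).factorial : ℂ) = ((m:ℂ)+1) * (m.factorial : ℂ) := by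
      rw [Nat.factorial_succ]; push_cast; ring
    have hsum : (m.factorial : ℂ) *
          (∑ j ∈ Finset.range (m+1), (α (m-j) / ((m-j).factorial : ℂ)) * gg j)
        = (∑ j ∈ Finset.range m, (m.choose j : ℂ) * α (m-j) * ((j.factorial : ℂ) * gg j))
          + α 0 * ((m.factorial : ℂ) * gg m) := by
      rw [Finset.mul_sum, Finset.sum_range_succ, Finset.sum_congr rfl hfacm]
      congr 1
      rw [Nat.sub_self]
      simp only [Nat.factorial_zero, Nat.cast_one, div_one]
      ring
    have hite2 : (m.factorial : ℂ) * (3*t*(if 2 ≤ m then gg (m-2) else 0))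
        = 3 * t * (((m+1 : ℕ) : ℂ) - 1) * (((m+1 : ℕ) : ℂ) - 2) *
          (if 2 ≤ m then ((m-2).factorial : ℂ) * gg (m-2) else 0) := by
      by_cases hm2 : 2 ≤ m
      · rw [if_pos hm2, if_pos hm2]
        obtain ⟨m', rfl⟩ : ∃ m', m = m' + 2 := ⟨m - 2, by omega⟩
        simp only [Nat.add_sub_cancel]
        rw [Nat.factorial_succ, Nat.factorial_succ]
        push_cast
        ring
      · rw [if_neg hm2, if_neg hm2]; ring
    calc ((m+1).factorial : ℂ) * gg (m+1)
        = (m.factorial : ℂ) * (gg (m+1) * ((m:ℂ)+1)) := by rw [hfs]; ring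
      _ = _ := by
          rw [E1, mul_add, mul_add, hsum, hite2]
          push_cast
          ring
end

section
/- Let D = {(z,w) ∈ ℂ² : 30z²w² + 1 ≠ 0} and define on D the rational functions U(z,w) = −240zw / (30z²w² + 1)², V(z,w) = (3600 w⁴z² − 120 w²) / (30z²w² + 1)², and V̂(z,w) = (3600 z⁴w² − 120 z²) / (30z²w² + 1)² (so that V̂(z,w) = V(w,z)). Then on D the stationary Novikov-Veselov equation holds as an identity of rational functions: ∂_z³ U + ∂_w³ U − 3 ∂_z(V·U) − 3 ∂_w(V̂·U) = 0, and moreover ∂_w V = ∂_z U. (Here w plays the role of z̄ and V̂ the role of V̄, so U is a stationary solution of the Novikov-Veselov equation with potential V.) -/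
/-- `U(z,w) = −240zw / (30z²w² + 1)²` (with `w` playing the role of `z̄`). -/
noncomputable def Unv (z w : ℂ) : ℂ := -240 * z * w / (30 * z ^ 2 * w ^ 2 + 1) ^ 2

/-- `V(z,w) = (3600w⁴z² − 120w²) / (30z²w² + 1)²`. -/
noncomputable def Vnv (z w : ℂ) : ℂ :=
  (3600 * w ^ 4 * z ^ 2 - 120 * w ^ 2) / (30 * z ^ 2 * w ^ 2 + 1) ^ 2

/-- `V̂(z,w) = (3600z⁴w² − 120z²) / (30z²w² + 1)²` (the role of `V̄`). -/
noncomputable def Vnvhat (z w : ℂ) : ℂ :=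
  (3600 * z ^ 4 * w ^ 2 - 120 * z ^ 2) / (30 * z ^ 2 * w ^ 2 + 1) ^ 2

/-- derivative of a quartic polynomial -/
lemma hasDerivAt_quartic (a0 a1 a2 a3 a4 x : ℂ) :
    HasDerivAt (fun t : ℂ => a0 + a1 * t + a2 * t ^ 2 + a3 * t ^ 3 + a4 * t ^ 4)
      (a1 + 2 * a2 * x + 3 * a3 * x ^ 2 + 4 * a4 * x ^ 3) x := by
  have h : HasDerivAt (fun t : ℂ => a0 + a1 * t + a2 * t ^ 2 + a3 * t ^ 3 + a4 * t ^ 4)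
      (0 + a1 * 1 + a2 * ((2 : ℕ) * x ^ 1) + a3 * ((3 : ℕ) * x ^ 2) + a4 * ((4 : ℕ) * x ^ 3)) x :=
    ((((hasDerivAt_const x a0).add ((hasDerivAt_id x).const_mul a1)).add
      ((hasDerivAt_pow 2 x).const_mul a2)).add
      ((hasDerivAt_pow 3 x).const_mul a3)).add
      ((hasDerivAt_pow 4 x).const_mul a4)
  convert h using 1
  push_cast
  ring

lemma hasDerivAt_quartic' (a0 a1 a2 a3 a4 x d : ℂ) (f : ℂ → ℂ)
    (hf : ∀ t, f t = a0 + a1 * t + a2 * t ^ 2 + a3 * t ^ 3 + a4 * t ^ 4)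
    (hd : d = a1 + 2 * a2 * x + 3 * a3 * x ^ 2 + 4 * a4 * x ^ 3) :
    HasDerivAt f d x := by
  have hfe : f = fun t : ℂ => a0 + a1 * t + a2 * t ^ 2 + a3 * t ^ 3 + a4 * t ^ 4 := funext hf
  rw [hfe, hd]
  exact hasDerivAt_quartic a0 a1 a2 a3 a4 x

/-- quotient rule for `f / q ^ (k+1)` -/
lemma hasDerivAt_divd (k : ℕ) (f q : ℂ → ℂ) (f' q' x : ℂ)
    (hf : HasDerivAt f f' x) (hq : HasDerivAt q q' x) (h0 : q x ≠ 0) :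
    HasDerivAt (fun t => f t / q t ^ (k + 1))
      ((f' * q x - ((k : ℂ) + 1) * f x * q') / q x ^ (k + 2)) x := by
  have hqk : HasDerivAt (fun t => q t ^ (k + 1)) (((k : ℂ) + 1) * q x ^ k * q') x := by
    have := hq.fun_pow (k + 1)
    simpa using this
  have h := hf.fun_div hqk (pow_ne_zero _ h0)
  refine h.congr_deriv ?_
  have h2 : q x ^ (k + 1) ≠ 0 := pow_ne_zero _ h0
  have h3 : q x ^ (k + 2) ≠ 0 := pow_ne_zero _ h0
  rw [div_eq_div_iff (pow_ne_zero _ h2) h3]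
  ring

lemma nv_L1 (w z : ℂ) (h : 30 * z ^ 2 * w ^ 2 + 1 ≠ 0) :
    HasDerivAt (fun t => Unv t w)
      ((-240 * w + 21600 * z ^ 2 * w ^ 3) / (30 * z ^ 2 * w ^ 2 + 1) ^ 3) z := by
  have hf : HasDerivAt (fun t : ℂ => -240 * t * w) (-240 * w) z :=
    hasDerivAt_quartic' 0 (-240 * w) 0 0 0 z _ _ (fun t => by ring) (by ring)
  have hq : HasDerivAt (fun t : ℂ => 30 * t ^ 2 * w ^ 2 + 1) (60 * z * w ^ 2) z :=
    hasDerivAt_quartic' 1 0 (30 * w ^ 2) 0 0 z _ _ (fun t => by ring) (by ring)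
  have hd := hasDerivAt_divd 1 _ _ _ _ z hf hq h
  have he : (fun t => Unv t w) = fun t : ℂ =>
      (fun t : ℂ => -240 * t * w) t / (fun t : ℂ => 30 * t ^ 2 * w ^ 2 + 1) t ^ (1 + 1) := by
    funext t; simp only [Unv]
  rw [he]
  convert hd using 1
  field_simp
  ring

lemma nv_L2 (w z : ℂ) (h : 30 * z ^ 2 * w ^ 2 + 1 ≠ 0) :
    HasDerivAt (fun t : ℂ => (-240 * w + 21600 * t ^ 2 * w ^ 3) / (30 * t ^ 2 * w ^ 2 + 1) ^ 3)
      ((86400 * z * w ^ 3 - 2592000 * z ^ 3 * w ^ 5) / (30 * z ^ 2 * w ^ 2 + 1) ^ 4) z := by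
  have hf : HasDerivAt (fun t : ℂ => -240 * w + 21600 * t ^ 2 * w ^ 3) (43200 * z * w ^ 3) z :=
    hasDerivAt_quartic' (-240 * w) 0 (21600 * w ^ 3) 0 0 z _ _ (fun t => by ring) (by ring)
  have hq : HasDerivAt (fun t : ℂ => 30 * t ^ 2 * w ^ 2 + 1) (60 * z * w ^ 2) z :=
    hasDerivAt_quartic' 1 0 (30 * w ^ 2) 0 0 z _ _ (fun t => by ring) (by ring)
  have hd := hasDerivAt_divd 2 _ _ _ _ z hf hq h
  convert hd using 1
  field_simp
  ring

lemma nv_L3 (w z : ℂ) (h : 30 * z ^ 2 * w ^ 2 + 1 ≠ 0) :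
    HasDerivAt (fun t : ℂ =>
        (86400 * t * w ^ 3 - 2592000 * t ^ 3 * w ^ 5) / (30 * t ^ 2 * w ^ 2 + 1) ^ 4)
      ((86400 * w ^ 3 - 25920000 * z ^ 2 * w ^ 5 + 388800000 * z ^ 4 * w ^ 7) /
        (30 * z ^ 2 * w ^ 2 + 1) ^ 5) z := by
  have hf : HasDerivAt (fun t : ℂ => 86400 * t * w ^ 3 - 2592000 * t ^ 3 * w ^ 5)
      (86400 * w ^ 3 - 7776000 * z ^ 2 * w ^ 5) z :=
    hasDerivAt_quartic' 0 (86400 * w ^ 3) 0 (-2592000 * w ^ 5) 0 z _ _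
      (fun t => by ring) (by ring)
  have hq : HasDerivAt (fun t : ℂ => 30 * t ^ 2 * w ^ 2 + 1) (60 * z * w ^ 2) z :=
    hasDerivAt_quartic' 1 0 (30 * w ^ 2) 0 0 z _ _ (fun t => by ring) (by ring)
  have hd := hasDerivAt_divd 3 _ _ _ _ z hf hq h
  convert hd using 1
  field_simp
  ring

/-- derivative of the single-fraction form of `V·U` in the first variable -/
lemma nv_L4 (w z : ℂ) (h : 30 * z ^ 2 * w ^ 2 + 1 ≠ 0) :
    HasDerivAt (fun t : ℂ =>
        (28800 * w ^ 3 * t - 864000 * w ^ 5 * t ^ 3) / (30 * t ^ 2 * w ^ 2 + 1) ^ 4)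
      ((28800 * w ^ 3 - 8640000 * z ^ 2 * w ^ 5 + 129600000 * z ^ 4 * w ^ 7) /
        (30 * z ^ 2 * w ^ 2 + 1) ^ 5) z := by
  have hf : HasDerivAt (fun t : ℂ => 28800 * w ^ 3 * t - 864000 * w ^ 5 * t ^ 3)
      (28800 * w ^ 3 - 2592000 * w ^ 5 * z ^ 2) z :=
    hasDerivAt_quartic' 0 (28800 * w ^ 3) 0 (-864000 * w ^ 5) 0 z _ _
      (fun t => by ring) (by ring)
  have hq : HasDerivAt (fun t : ℂ => 30 * t ^ 2 * w ^ 2 + 1) (60 * z * w ^ 2) z :=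
    hasDerivAt_quartic' 1 0 (30 * w ^ 2) 0 0 z _ _ (fun t => by ring) (by ring)
  have hd := hasDerivAt_divd 3 _ _ _ _ z hf hq h
  convert hd using 1
  field_simp
  ring

/-- derivative of `V(z,·)` -/
lemma nv_L5 (w z : ℂ) (h : 30 * z ^ 2 * w ^ 2 + 1 ≠ 0) :
    HasDerivAt (fun t => Vnv z t)
      ((-240 * w + 21600 * z ^ 2 * w ^ 3) / (30 * z ^ 2 * w ^ 2 + 1) ^ 3) w := by
  have hf : HasDerivAt (fun t : ℂ => 3600 * t ^ 4 * z ^ 2 - 120 * t ^ 2)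
      (14400 * w ^ 3 * z ^ 2 - 240 * w) w :=
    hasDerivAt_quartic' 0 0 (-120) 0 (3600 * z ^ 2) w _ _ (fun t => by ring) (by ring)
  have h' : 30 * z ^ 2 * w ^ 2 + 1 ≠ 0 := h
  have hq : HasDerivAt (fun t : ℂ => 30 * z ^ 2 * t ^ 2 + 1) (60 * z ^ 2 * w) w :=
    hasDerivAt_quartic' 1 0 (30 * z ^ 2) 0 0 w _ _ (fun t => by ring) (by ring)
  have hq0 : (fun t : ℂ => 30 * z ^ 2 * t ^ 2 + 1) w ≠ 0 := h
  have hd := hasDerivAt_divd 1 _ _ _ _ w hf hq hq0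
  have he : (fun t => Vnv z t) = fun t : ℂ =>
      (fun t : ℂ => 3600 * t ^ 4 * z ^ 2 - 120 * t ^ 2) t /
        (fun t : ℂ => 30 * z ^ 2 * t ^ 2 + 1) t ^ (1 + 1) := by
    funext t; simp only [Vnv]
  rw [he]
  convert hd using 1
  field_simp
  ring

/-- the third iterated derivative of `U(·,w)` -/
lemma nv_U_iter3 (w z : ℂ) (h : 30 * z ^ 2 * w ^ 2 + 1 ≠ 0) :
    iteratedDeriv 3 (fun t => Unv t w) z =
      (86400 * w ^ 3 - 25920000 * z ^ 2 * w ^ 5 + 388800000 * z ^ 4 * w ^ 7) /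
        (30 * z ^ 2 * w ^ 2 + 1) ^ 5 := by
  have hcont : Continuous fun x : ℂ => 30 * x ^ 2 * w ^ 2 + 1 := by continuity
  have hopen : IsOpen {x : ℂ | 30 * x ^ 2 * w ^ 2 + 1 ≠ 0} :=
    isOpen_compl_singleton.preimage hcont
  have d1 : ∀ x ∈ {x : ℂ | 30 * x ^ 2 * w ^ 2 + 1 ≠ 0},
      deriv (fun t => Unv t w) x =
        (-240 * w + 21600 * x ^ 2 * w ^ 3) / (30 * x ^ 2 * w ^ 2 + 1) ^ 3 :=
    fun x hx => (nv_L1 w x hx).deriv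
  have d2 : ∀ x ∈ {x : ℂ | 30 * x ^ 2 * w ^ 2 + 1 ≠ 0},
      deriv (deriv (fun t => Unv t w)) x =
        (86400 * x * w ^ 3 - 2592000 * x ^ 3 * w ^ 5) / (30 * x ^ 2 * w ^ 2 + 1) ^ 4 := by
    intro x hx
    have hev : deriv (fun t => Unv t w) =ᶠ[nhds x]
        (fun t => (-240 * w + 21600 * t ^ 2 * w ^ 3) / (30 * t ^ 2 * w ^ 2 + 1) ^ 3) :=
      Filter.eventually_of_mem (hopen.mem_nhds hx) d1
    rw [hev.deriv_eq]
    exact (nv_L2 w x hx).deriv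
  have d3 : deriv (deriv (deriv (fun t => Unv t w))) z =
      (86400 * w ^ 3 - 25920000 * z ^ 2 * w ^ 5 + 388800000 * z ^ 4 * w ^ 7) /
        (30 * z ^ 2 * w ^ 2 + 1) ^ 5 := by
    have hev : deriv (deriv (fun t => Unv t w)) =ᶠ[nhds z]
        (fun t => (86400 * t * w ^ 3 - 2592000 * t ^ 3 * w ^ 5) /
          (30 * t ^ 2 * w ^ 2 + 1) ^ 4) :=
      Filter.eventually_of_mem (hopen.mem_nhds h) d2
    rw [hev.deriv_eq]
    exact (nv_L3 w z h).deriv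
  have h3 : iteratedDeriv 3 (fun t => Unv t w) = deriv (deriv (deriv (fun t => Unv t w))) := by
    rw [show (3 : ℕ) = 2 + 1 from rfl, iteratedDeriv_succ,
      show (2 : ℕ) = 1 + 1 from rfl, iteratedDeriv_succ, iteratedDeriv_one]
  rw [h3, d3]

/-- On the set `D` where `30z²w² + 1 ≠ 0`, the rational functions `U, V, V̂` satisfy
the stationary Novikov-Veselov equation
`∂_z³U + ∂_w³U − 3∂_z(VU) − 3∂_w(V̂U) = 0` together with `∂_w V = ∂_z U`, and
`V̂(z,w) = V(w,z)`. -/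
theorem stationary_NV_rational_solution :
    ∀ z w : ℂ, 30 * z ^ 2 * w ^ 2 + 1 ≠ 0 →
      (iteratedDeriv 3 (fun z' => Unv z' w) z + iteratedDeriv 3 (fun w' => Unv z w') w -
        3 * deriv (fun z' => Vnv z' w * Unv z' w) z -
        3 * deriv (fun w' => Vnvhat z w' * Unv z w') w = 0) ∧
      deriv (fun w' => Vnv z w') w = deriv (fun z' => Unv z' w) z ∧
      Vnvhat z w = Vnv w z := by
  intro z w h
  have h' : 30 * w ^ 2 * z ^ 2 + 1 ≠ 0 := by
    have he : 30 * w ^ 2 * z ^ 2 + 1 = 30 * z ^ 2 * w ^ 2 + 1 := by ring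
    rw [he]; exact h
  have hcont : Continuous fun x : ℂ => 30 * x ^ 2 * w ^ 2 + 1 := by continuity
  have hopen : IsOpen {x : ℂ | 30 * x ^ 2 * w ^ 2 + 1 ≠ 0} :=
    isOpen_compl_singleton.preimage hcont
  have hcont' : Continuous fun x : ℂ => 30 * x ^ 2 * z ^ 2 + 1 := by continuity
  have hopen' : IsOpen {x : ℂ | 30 * x ^ 2 * z ^ 2 + 1 ≠ 0} :=
    isOpen_compl_singleton.preimage hcont'
  -- the swap identities
  have swapU : (fun w' => Unv z w') = (fun t => Unv t z) := by
    funext t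
    simp only [Unv]
    rw [show (30 * z ^ 2 * t ^ 2 : ℂ) = 30 * t ^ 2 * z ^ 2 from by ring,
      show (-240 * z * t : ℂ) = -240 * t * z from by ring]
  have swapVhat : (fun w' => Vnvhat z w' * Unv z w') = (fun t => Vnv t z * Unv t z) := by
    funext t
    simp only [Unv, Vnv, Vnvhat]
    rw [show (30 * z ^ 2 * t ^ 2 : ℂ) = 30 * t ^ 2 * z ^ 2 from by ring,
      show (-240 * z * t : ℂ) = -240 * t * z from by ring]
  -- third derivatives
  have hA := nv_U_iter3 w z h
  have hB : iteratedDeriv 3 (fun w' => Unv z w') w =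
      (86400 * z ^ 3 - 25920000 * w ^ 2 * z ^ 5 + 388800000 * w ^ 4 * z ^ 7) /
        (30 * w ^ 2 * z ^ 2 + 1) ^ 5 := by
    rw [swapU]
    exact nv_U_iter3 z w h'
  -- derivative of V·U in z
  have hC : deriv (fun z' => Vnv z' w * Unv z' w) z =
      (28800 * w ^ 3 - 8640000 * z ^ 2 * w ^ 5 + 129600000 * z ^ 4 * w ^ 7) /
        (30 * z ^ 2 * w ^ 2 + 1) ^ 5 := by
    have hev : (fun z' => Vnv z' w * Unv z' w) =ᶠ[nhds z]
        (fun t => (28800 * w ^ 3 * t - 864000 * w ^ 5 * t ^ 3) /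
          (30 * t ^ 2 * w ^ 2 + 1) ^ 4) := by
      refine Filter.eventually_of_mem (hopen.mem_nhds h) (fun x hx => ?_)
      have hx' : (30 * x ^ 2 * w ^ 2 + 1 : ℂ) ≠ 0 := hx
      simp only [Unv, Vnv]
      field_simp
      ring
    rw [hev.deriv_eq]
    exact (nv_L4 w z h).deriv
  -- derivative of V̂·U in w
  have hD : deriv (fun w' => Vnvhat z w' * Unv z w') w =
      (28800 * z ^ 3 - 8640000 * w ^ 2 * z ^ 5 + 129600000 * w ^ 4 * z ^ 7) /
        (30 * w ^ 2 * z ^ 2 + 1) ^ 5 := by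
    rw [swapVhat]
    have hev : (fun t => Vnv t z * Unv t z) =ᶠ[nhds w]
        (fun t => (28800 * z ^ 3 * t - 864000 * z ^ 5 * t ^ 3) /
          (30 * t ^ 2 * z ^ 2 + 1) ^ 4) := by
      refine Filter.eventually_of_mem (hopen'.mem_nhds h') (fun x hx => ?_)
      have hx' : (30 * x ^ 2 * z ^ 2 + 1 : ℂ) ≠ 0 := hx
      simp only [Unv, Vnv]
      field_simp
      ring
    rw [hev.deriv_eq]
    exact (nv_L4 z w h').deriv
  refine ⟨?_, ?_, ?_⟩
  · rw [hA, hB, hC, hD]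
    field_simp
    ring
  · rw [(nv_L5 w z h).deriv, (nv_L1 w z h).deriv]
  · simp only [Vnvhat, Vnv]
    rw [show (30 * w ^ 2 * z ^ 2 : ℂ) = 30 * z ^ 2 * w ^ 2 from by ring]
end
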